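/- arXiv:2408.05282 — 3 statements merged into one kernel-verified Lean document; each statement's English description precedes it below -/
import Mathlib

section
/- Let G be a 2-vertex-connected simple graph without irrelevant edges and without non-isolating 2-vertex cuts. Let (V1, V2) be a partition of V(G) such that for each i ∈ {1,2}, |Vi| ≥ 3, and if |Vi| = 3 then the induced subgraph G[Vi] is a triangle. Then there exists a matching of size 3 between V1 and V2 in G. -/
open SimpleGraph

open scoped Classical

namespace ECSS

/-! ### Generic graph notions -/

section Generic

variable {W : Type*}

/-- The number of connected components of a graph. -/
noncomputable def numComponents (Γ : SimpleGraph W) : ℕ :=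
  Nat.card Γ.ConnectedComponent

/-- Deleting the vertex set `S` increases the number of connected components. -/
def IsCutSet (Γ : SimpleGraph W) (S : Set W) : Prop :=
  numComponents Γ < numComponents (Γ.induce Sᶜ)

/-- A `k`-vertex cut: a set of `k` vertices whose deletion increases the number of
connected components. -/
def IsVertexCut (Γ : SimpleGraph W) (S : Set W) (k : ℕ) : Prop :=
  S.ncard = k ∧ IsCutSet Γ S

/-- 2-vertex-connected: connected and with no cut vertex. -/
def TwoVertexConnected (Γ : SimpleGraph W) : Prop :=
  Γ.Connected ∧ ∀ v : W, ¬ IsCutSet Γ {v}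

/-- 2-edge-connected: connected, and still connected after deleting any single edge. -/
def IsTwoEdgeConnected (Γ : SimpleGraph W) : Prop :=
  Γ.Connected ∧ ∀ e ∈ Γ.edgeSet, (Γ.deleteEdges {e}).Connected

/-- A small 3-vertex cut: deleting it leaves exactly two connected components,
one of which has at most 6 vertices. -/
def IsSmall3Cut (Γ : SimpleGraph W) (S : Set W) : Prop :=
  IsVertexCut Γ S 3 ∧ numComponents (Γ.induce Sᶜ) = 2 ∧
    ∃ c : (Γ.induce Sᶜ).ConnectedComponent, c.supp.ncard ≤ 6

/-- A large 3-vertex cut: a 3-vertex cut that is not small. -/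
def IsLarge3Cut (Γ : SimpleGraph W) (S : Set W) : Prop :=
  IsVertexCut Γ S 3 ∧ ¬ IsSmall3Cut Γ S

/-- An isolating 2-vertex cut: deleting it leaves exactly two connected components,
one of which has size 1. -/
def IsIsolating2Cut (Γ : SimpleGraph W) (S : Set W) : Prop :=
  IsVertexCut Γ S 2 ∧ numComponents (Γ.induce Sᶜ) = 2 ∧
    ∃ c : (Γ.induce Sᶜ).ConnectedComponent, c.supp.ncard = 1

/-- A non-isolating 2-vertex cut: a 2-vertex cut that is not isolating. -/
def IsNonIsolating2Cut (Γ : SimpleGraph W) (S : Set W) : Prop :=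
  IsVertexCut Γ S 2 ∧ ¬ IsIsolating2Cut Γ S

/-- An irrelevant edge `xy`: an edge such that `{x, y}` is a 2-vertex cut. -/
def IsIrrelevantEdge (Γ : SimpleGraph W) (x y : W) : Prop :=
  Γ.Adj x y ∧ IsVertexCut Γ {x, y} 2

/-- A matching of size `k` between `V1` and `V2`: `k` pairwise vertex-disjoint edges,
each with one endpoint in `V1` and the other in `V2`. -/
def HasMatchingBetween (Γ : SimpleGraph W) (V1 V2 : Set W) (k : ℕ) : Prop :=
  ∃ f g : Fin k → W,
    (∀ i, f i ∈ V1 ∧ g i ∈ V2 ∧ Γ.Adj (f i) (g i)) ∧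
    ∀ i j, i ≠ j → f i ≠ f j ∧ g i ≠ g j ∧ f i ≠ g j ∧ g i ≠ f j

/-- A non-trivial segment: a maximal 2-node-connected (induced) subgraph with at
least 3 nodes. -/
def IsNontrivialSegment (Γ : SimpleGraph W) (S : Set W) : Prop :=
  3 ≤ S.ncard ∧ TwoVertexConnected (Γ.induce S) ∧
    ∀ S' : Set W, S ⊆ S' → TwoVertexConnected (Γ.induce S') → S' = S

/-- A trivial segment: a node that is not contained in any non-trivial segment. -/
def IsTrivialSegment (Γ : SimpleGraph W) (A : W) : Prop :=
  ∀ S : Set W, IsNontrivialSegment Γ S → A ∉ S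

/-- A pendant node: a node adjacent to exactly one other node. -/
def IsPendantNode (Γ : SimpleGraph W) (A : W) : Prop :=
  (Γ.neighborSet A).ncard = 1

/-- The graph `Γ` is a path from `P` to `Q` (of length at least 1):
there is a path walk from `P` to `Q` visiting every vertex and using every edge. -/
def IsPathGraphWithEnds (Γ : SimpleGraph W) (P Q : W) : Prop :=
  ∃ p : Γ.Walk P Q, p.IsPath ∧ 1 ≤ p.length ∧ (∀ n : W, n ∈ p.support) ∧
    ∀ e ∈ Γ.edgeSet, e ∈ p.edges

end Generic

/-! ### Subgraph notions -/

variable {V : Type*}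

/-- A subgraph is 2-edge-connected: connected and still connected after deleting any
single edge. -/
def SubTwoEC {G : SimpleGraph V} (K : G.Subgraph) : Prop :=
  K.Connected ∧ ∀ e ∈ K.edgeSet, (K.deleteEdges {e}).Connected

/-- A 2-edge-connected spanning subgraph (2-ECSS) of `G`. -/
def IsTwoECSS (G : SimpleGraph V) (H : G.Subgraph) : Prop :=
  H.IsSpanning ∧ SubTwoEC H

/-- The minimum number of edges of a 2-ECSS of `G`. -/
noncomputable def opt (G : SimpleGraph V) : ℕ :=
  sInf {n : ℕ | ∃ H : G.Subgraph, IsTwoECSS G H ∧ H.edgeSet.ncard = n}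

/-- `C` is a (maximal) connected component of `H`. -/
def IsComponent {G : SimpleGraph V} (H C : G.Subgraph) : Prop :=
  C ≤ H ∧ C.Connected ∧ ∀ C' : G.Subgraph, C ≤ C' → C' ≤ H → C'.Connected → C' = C

/-- `B` is a block of `C`: a maximal 2-edge-connected subgraph. -/
def IsBlock {G : SimpleGraph V} (C B : G.Subgraph) : Prop :=
  B ≤ C ∧ SubTwoEC B ∧ ∀ B' : G.Subgraph, B ≤ B' → B' ≤ C → SubTwoEC B' → B' = B

/-- `e` is a bridge of the subgraph `C`: deleting it disconnects its endpoints. -/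
def IsBridgeIn {G : SimpleGraph V} (C : G.Subgraph) (e : Sym2 V) : Prop :=
  e ∈ C.edgeSet ∧
    ∀ a b : V, s(a, b) = e → ¬ (C.deleteEdges {e}).spanningCoe.Reachable a b

/-- The subgraph contains a bridge ("complex" when it is a component). -/
def HasBridge {G : SimpleGraph V} (C : G.Subgraph) : Prop :=
  ∃ e, IsBridgeIn C e

/-- The subgraph has no bridges. -/
def Bridgeless {G : SimpleGraph V} (H : G.Subgraph) : Prop :=
  ∀ e : Sym2 V, ¬ IsBridgeIn H e

/-- The subgraph `C` is a cycle on `i` vertices (connected and 2-regular). -/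
def IsCycleOn {G : SimpleGraph V} (C : G.Subgraph) (i : ℕ) : Prop :=
  C.Connected ∧ C.verts.ncard = i ∧ ∀ v ∈ C.verts, (C.neighborSet v).ncard = 2

/-- A block `B` of a component `C` is pendant if `C` minus the vertices of `B`
is connected. -/
def IsPendant {G : SimpleGraph V} (C B : G.Subgraph) : Prop :=
  (C.deleteVerts B.verts).Connected

/-- A 2-edge cover: a spanning subgraph in which every vertex has degree at least 2. -/
def IsTwoEdgeCover {G : SimpleGraph V} (H : G.Subgraph) : Prop :=
  H.IsSpanning ∧ ∀ v : V, 2 ≤ (H.neighborSet v).ncard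

/-- A 2-edge cover is triangle-free if no component is a triangle. -/
def IsTriangleFree {G : SimpleGraph V} (H : G.Subgraph) : Prop :=
  ∀ C : G.Subgraph, IsComponent H C → ¬ IsCycleOn C 3

/-- A canonical 2-edge cover: every non-complex component is a cycle on `i` vertices
for some `4 ≤ i ≤ 7` or has at least 8 edges, and in every complex component each
pendant block has at least 6 edges and each non-pendant block has at least 4 edges. -/
def IsCanonical {G : SimpleGraph V} (H : G.Subgraph) : Prop :=
  (∀ C : G.Subgraph, IsComponent H C → ¬ HasBridge C →
      (∃ i, 4 ≤ i ∧ i ≤ 7 ∧ IsCycleOn C i) ∨ 8 ≤ C.edgeSet.ncard) ∧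
  (∀ C : G.Subgraph, IsComponent H C → HasBridge C → ∀ B : G.Subgraph, IsBlock C B →
      (IsPendant C B → 6 ≤ B.edgeSet.ncard) ∧ (¬ IsPendant C B → 4 ≤ B.edgeSet.ncard))

/-- Credit of a single component: a complex component gets its component credit 1,
plus 1 for each block, plus 1/4 for each bridge; a 2EC component with at least 8
edges gets 2; a 2EC component that is a cycle `C_i` gets `i/4` (its number of edges
over 4). -/
noncomputable def componentCredit {G : SimpleGraph V} (C : G.Subgraph) : ℚ :=
  if HasBridge C then
    1 + ({B : G.Subgraph | IsBlock C B}.ncard : ℚ)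
      + ({e : Sym2 V | IsBridgeIn C e}.ncard : ℚ) / 4
  else if 8 ≤ C.edgeSet.ncard then 2
  else (C.edgeSet.ncard : ℚ) / 4

/-- Total credit of a 2-edge cover: sum of the credits of its components. -/
noncomputable def credit {G : SimpleGraph V} (H : G.Subgraph) : ℚ :=
  ∑ᶠ C ∈ {C : G.Subgraph | IsComponent H C}, componentCredit C

/-- Cost of a 2-edge cover: number of edges plus total credit. -/
noncomputable def cost {G : SimpleGraph V} (H : G.Subgraph) : ℚ :=
  (H.edgeSet.ncard : ℚ) + credit H

/-- An `α`-contractible subgraph: a 2-edge-connected subgraph `C` (with at least one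
edge) such that every 2-ECSS of `G` contains at least `|E(C)|/α` edges with both
endpoints in `V(C)`. -/
def IsContractible (α : ℚ) (G : SimpleGraph V) (C : G.Subgraph) : Prop :=
  SubTwoEC C ∧ ∀ H : G.Subgraph, IsTwoECSS G H →
    (C.edgeSet.ncard : ℚ) / α ≤ ({e ∈ H.edgeSet | ∀ x ∈ e, x ∈ C.verts}.ncard : ℚ)

/-- An `(α, ε)`-structured graph: simple (automatic), 2-vertex-connected, with at
least `4/ε` vertices, and containing no `α`-contractible subgraph with at most `2/ε`
edges, no irrelevant edge, no non-isolating 2-vertex cut, and no large 3-vertex cut. -/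
def IsStructured (α ε : ℚ) (G : SimpleGraph V) : Prop :=
  TwoVertexConnected G ∧ (4 / ε ≤ (Nat.card V : ℚ)) ∧
  (∀ C : G.Subgraph, C.edgeSet.Nonempty → (C.edgeSet.ncard : ℚ) ≤ 2 / ε →
      ¬ IsContractible α G C) ∧
  (∀ x y : V, ¬ IsIrrelevantEdge G x y) ∧
  (∀ S : Set V, ¬ IsNonIsolating2Cut G S) ∧
  (∀ S : Set V, ¬ IsLarge3Cut G S)

/-! ### The component graph -/

/-- The component graph `Ĝ_H`: nodes are the components of `H`, two nodes being
adjacent if some edge of `G` joins the corresponding components (self-loops are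
discarded). -/
def compGraph {G : SimpleGraph V} (H : G.Subgraph) :
    SimpleGraph {C : G.Subgraph // IsComponent H C} where
  Adj A B := A ≠ B ∧ ∃ a b : V, a ∈ A.1.verts ∧ b ∈ B.1.verts ∧ G.Adj a b
  symm := by
    constructor
    rintro A B ⟨hne, a, b, ha, hb, hab⟩
    exact ⟨hne.symm, b, a, hb, ha, hab.symm⟩
  loopless := by
    constructor
    rintro A ⟨hne, -⟩
    exact hne rfl

/-- A cycle in the component graph `Ĝ_H` (as a multigraph), given by pairwise
distinct components `D i` and pairwise distinct edges of `G`, the `i`-th edge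
joining a vertex `a i` of `D i` to a vertex `b i` of `D (i+1)`. -/
def IsCompCycle {G : SimpleGraph V} (H : G.Subgraph) {m : ℕ}
    (D : Fin (m + 2) → G.Subgraph) (a b : Fin (m + 2) → V) : Prop :=
  Function.Injective D ∧ (∀ i, IsComponent H (D i)) ∧
  (∀ i, a i ∈ (D i).verts ∧ b i ∈ (D (i + 1)).verts ∧ G.Adj (a i) (b i)) ∧
  Function.Injective fun i => s(a i, b i)

/-! ### Contracting the 2-edge-connected components: solution types -/

/-- `x` and `y` lie in the same 2-edge-connected component of `K`: they are
reachable, and remain reachable after the deletion of any single edge. -/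
def SameTwoEC {G : SimpleGraph V} (K : G.Subgraph) (x y : V) : Prop :=
  K.spanningCoe.Reachable x y ∧
    ∀ e ∈ K.edgeSet, (K.deleteEdges {e}).spanningCoe.Reachable x y

/-- The setoid on the vertices of `K` identifying vertices in the same
2-edge-connected component. -/
def twoECSetoid {G : SimpleGraph V} (K : G.Subgraph) : Setoid K.verts where
  r x y := SameTwoEC K x.1 y.1
  iseqv := by
    constructor
    · exact fun x => ⟨Reachable.refl _, fun e _ => Reachable.refl _⟩
    · exact fun h => ⟨h.1.symm, fun e he => (h.2 e he).symm⟩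
    · exact fun h h' => ⟨h.1.trans h'.1, fun e he => (h.2 e he).trans (h'.2 e he)⟩

/-- The super-nodes: 2-edge-connected components of `K`, as a quotient. -/
def SNode {G : SimpleGraph V} (K : G.Subgraph) :=
  Quotient (twoECSetoid K)

/-- The graph obtained from `K` by contracting each 2-edge-connected component into
a single super-node. -/
def contractTwoEC {G : SimpleGraph V} (K : G.Subgraph) : SimpleGraph (SNode K) where
  Adj P Q := P ≠ Q ∧ ∃ x y : K.verts,
    Quotient.mk (twoECSetoid K) x = P ∧ Quotient.mk (twoECSetoid K) y = Q ∧ K.Adj x.1 y.1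
  symm := by
    constructor
    rintro P Q ⟨hne, x, y, hx, hy, hxy⟩
    exact ⟨hne.symm, y, x, hy, hx, hxy.symm⟩
  loopless := by
    constructor
    rintro P ⟨hne, -⟩
    exact hne rfl

/-- The super-node containing a vertex. -/
def cls {G : SimpleGraph V} (K : G.Subgraph) (x : K.verts) : SNode K :=
  Quotient.mk (twoECSetoid K) x

/-- Type A: the contraction is a single super-node. -/
def TypeA {G : SimpleGraph V} (K : G.Subgraph) (u v w : K.verts) : Prop :=
  ∀ n : SNode K, n = cls K u

/-- Type B1: the contraction is a path `C₁ - ⋯ - C_k` of length at least 1 with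
`u, v, w ∈ C₁ ∪ C_k` and at most two of `u, v, w` in each of `C₁` and `C_k`. -/
def TypeB1 {G : SimpleGraph V} (K : G.Subgraph) (u v w : K.verts) : Prop :=
  ∃ P Q : SNode K, IsPathGraphWithEnds (contractTwoEC K) P Q ∧
    (cls K u = P ∨ cls K u = Q) ∧ (cls K v = P ∨ cls K v = Q) ∧
    (cls K w = P ∨ cls K w = Q) ∧
    ¬ (cls K u = P ∧ cls K v = P ∧ cls K w = P) ∧
    ¬ (cls K u = Q ∧ cls K v = Q ∧ cls K w = Q)

/-- Type B2: the contraction consists of two isolated super-nodes, each containing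
at most two of `u, v, w`. -/
def TypeB2 {G : SimpleGraph V} (K : G.Subgraph) (u v w : K.verts) : Prop :=
  ∃ P Q : SNode K, P ≠ Q ∧ (∀ n : SNode K, n = P ∨ n = Q) ∧
    (∀ P' Q' : SNode K, ¬ (contractTwoEC K).Adj P' Q') ∧
    ¬ (cls K u = cls K v ∧ cls K v = cls K w)

/-- Type C1: the contraction is a tree and `u, v, w` lie in three distinct
super-nodes. -/
def TypeC1 {G : SimpleGraph V} (K : G.Subgraph) (u v w : K.verts) : Prop :=
  (contractTwoEC K).IsTree ∧
    cls K u ≠ cls K v ∧ cls K u ≠ cls K w ∧ cls K v ≠ cls K w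

/-- Type C2: the contraction is a path of length at least 1 together with one
isolated super-node, such that each of the two path ends and the isolated super-node
contains exactly one of `u, v, w`. -/
def TypeC2 {G : SimpleGraph V} (K : G.Subgraph) (u v w : K.verts) : Prop :=
  ∃ P Q R : SNode K,
    (∃ p : (contractTwoEC K).Walk P Q, p.IsPath ∧ 1 ≤ p.length ∧ R ∉ p.support ∧
      (∀ n : SNode K, n ∈ p.support ∨ n = R) ∧
      ∀ e ∈ (contractTwoEC K).edgeSet, e ∈ p.edges) ∧
    cls K u ≠ cls K v ∧ cls K u ≠ cls K w ∧ cls K v ≠ cls K w ∧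
    ({cls K u, cls K v, cls K w} : Set (SNode K)) = {P, Q, R}

/-- Type C3: the contraction consists of the three isolated super-nodes of
`u`, `v` and `w`. -/
def TypeC3 {G : SimpleGraph V} (K : G.Subgraph) (u v w : K.verts) : Prop :=
  cls K u ≠ cls K v ∧ cls K u ≠ cls K w ∧ cls K v ≠ cls K w ∧
  (∀ n : SNode K, n = cls K u ∨ n = cls K v ∨ n = cls K w) ∧
  ∀ P Q : SNode K, ¬ (contractTwoEC K).Adj P Q

/-- `K` is of one of the six solution types with respect to `u, v, w`. -/
def OfAnyType {G : SimpleGraph V} (K : G.Subgraph) (u v w : K.verts) : Prop :=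
  TypeA K u v w ∨ TypeB1 K u v w ∨ TypeB2 K u v w ∨
    TypeC1 K u v w ∨ TypeC2 K u v w ∨ TypeC3 K u v w

/-! ### Sides of a 3-vertex cut, contracted sides, and related helpers -/

/-- The induced subgraph `G[V₁ ∪ {u,v,w}]` (as a subgraph of `G`). -/
def sideOne (G : SimpleGraph V) (V1 : Set V) (u v w : V) : G.Subgraph :=
  (⊤ : G.Subgraph).induce (V1 ∪ {u, v, w})

/-- The induced subgraph `G[V₂ ∪ {u,v,w}]` minus the edges `uv`, `vw`, `uw`. -/
def sideTwo (G : SimpleGraph V) (V2 : Set V) (u v w : V) : G.Subgraph :=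
  ((⊤ : G.Subgraph).induce (V2 ∪ {u, v, w})).deleteEdges {s(u, v), s(v, w), s(u, w)}

/-- The connected component of the subgraph `K` containing the vertex `z`. -/
def compOf {G : SimpleGraph V} (K : G.Subgraph) (z : V) : G.Subgraph where
  verts := {y | y ∈ K.verts ∧ K.spanningCoe.Reachable z y}
  Adj x y := K.Adj x y ∧ K.spanningCoe.Reachable z x
  adj_sub := fun h => K.adj_sub h.1
  edge_vert := fun h => ⟨K.edge_vert h.1, h.2⟩
  symm := by
    constructor
    rintro x y ⟨hxy, hzx⟩
    exact ⟨hxy.symm, hzx.trans (SimpleGraph.Adj.reachable (by exact hxy))⟩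

/-- There is an edge of `Gi` that is not an edge of `Hi` between `A` and `B`. -/
def CrossEdge {G : SimpleGraph V} (Gi Hi : G.Subgraph) (A B : Set V) : Prop :=
  ∃ a b : V, a ∈ A ∧ b ∈ B ∧ Gi.Adj a b ∧ ¬ Hi.Adj a b

/-- Claim (1) of the spanning-tree lemma for 3-vertex cuts. -/
def ClaimOne {G : SimpleGraph V} (Gi Hi : G.Subgraph) (x : V) : Prop :=
  compOf Hi x ≠ Hi →
    ∃ a b : V, a ∈ (compOf Hi x).verts ∧ b ∈ Hi.verts ∧ b ∉ (compOf Hi x).verts ∧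
      Gi.Adj a b ∧ ¬ Hi.Adj a b

/-- Claim (2) of the spanning-tree lemma for 3-vertex cuts. -/
def ClaimTwo {G : SimpleGraph V} (Gi Hi : G.Subgraph) (u v w : V) : Prop :=
  (Disjoint (compOf Hi u).verts (compOf Hi v).verts ∧
      Disjoint (compOf Hi v).verts (compOf Hi w).verts ∧
      Disjoint (compOf Hi u).verts (compOf Hi w).verts) →
    (CrossEdge Gi Hi (compOf Hi u).verts (compOf Hi v).verts ∧
        CrossEdge Gi Hi (compOf Hi v).verts (compOf Hi w).verts) ∨
      (CrossEdge Gi Hi (compOf Hi v).verts (compOf Hi w).verts ∧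
        CrossEdge Gi Hi (compOf Hi u).verts (compOf Hi w).verts) ∨
      (CrossEdge Gi Hi (compOf Hi u).verts (compOf Hi v).verts ∧
        CrossEdge Gi Hi (compOf Hi u).verts (compOf Hi w).verts)

/-- The condition of the gluing lemma: every edge of `Hi` is in a 2-edge-connected
component of `Hi`, or lies on an `x`-`y` path in `Hi` for distinct
`x, y ∈ {u, v, w}` such that `x` and `y` are also connected in `Hj`. -/
def EdgeCond {G : SimpleGraph V} (Hi Hj : G.Subgraph) (u v w : V) : Prop :=
  ∀ a b : V, Hi.Adj a b →
    SameTwoEC Hi a b ∨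
      ∃ x ∈ ({u, v, w} : Set V), ∃ y ∈ ({u, v, w} : Set V), x ≠ y ∧
        (∃ p : Hi.spanningCoe.Walk x y, p.IsPath ∧ s(a, b) ∈ p.edges) ∧
        Hj.spanningCoe.Reachable x y

/-- The set of all potential edges among a vertex set `S` (used to model the
contraction of `S` into a single vertex). -/
def cliqueOn (S : Set V) : Set (Sym2 V) :=
  {e | ∃ a ∈ S, ∃ b ∈ S, a ≠ b ∧ e = s(a, b)}

/-- The edge set `K` forms a 2-edge-connected spanning subgraph of the graph on `Wt`
with the set `S ⊆ Wt` contracted into a single vertex: modelled by making `S` into a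
blob using `cliqueOn S` (whose edges are never deleted). -/
def ContractedTwoECSS (Wt S : Set V) (K : Set (Sym2 V)) : Prop :=
  ((SimpleGraph.fromEdgeSet (K ∪ cliqueOn S)).induce Wt).Connected ∧
  ∀ e ∈ K, ((SimpleGraph.fromEdgeSet ((K \ {e}) ∪ cliqueOn S)).induce Wt).Connected

end ECSS

section ThreeMatchAux

variable {V : Type*} [Fintype V] [DecidableEq V]

/-- A crossing edge between `V1` and `V2`. -/
def MCross (G : SimpleGraph V) (V1 V2 : Set V) (a b : V) : Prop :=
  a ∈ V1 ∧ b ∈ V2 ∧ G.Adj a b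

lemma mcross_build {G : SimpleGraph V} {V1 V2 : Set V} (hdisj : Disjoint V1 V2)
    {a1 b1 a2 b2 a3 b3 : V}
    (h1 : MCross G V1 V2 a1 b1) (h2 : MCross G V1 V2 a2 b2) (h3 : MCross G V1 V2 a3 b3)
    (ha12 : a1 ≠ a2) (ha13 : a1 ≠ a3) (ha23 : a2 ≠ a3)
    (hb12 : b1 ≠ b2) (hb13 : b1 ≠ b3) (hb23 : b2 ≠ b3) :
    ECSS.HasMatchingBetween G V1 V2 3 := by
  have hne : ∀ {a b : V}, a ∈ V1 → b ∈ V2 → a ≠ b := by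
    intro a b ha hb h
    exact (Set.disjoint_left.mp hdisj ha) (h ▸ hb)
  have c11 : a1 ≠ b1 := hne h1.1 h1.2.1
  have c12 : a1 ≠ b2 := hne h1.1 h2.2.1
  have c13 : a1 ≠ b3 := hne h1.1 h3.2.1
  have c21 : a2 ≠ b1 := hne h2.1 h1.2.1
  have c22 : a2 ≠ b2 := hne h2.1 h2.2.1
  have c23 : a2 ≠ b3 := hne h2.1 h3.2.1
  have c31 : a3 ≠ b1 := hne h3.1 h1.2.1
  have c32 : a3 ≠ b2 := hne h3.1 h2.2.1
  have c33 : a3 ≠ b3 := hne h3.1 h3.2.1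
  have d11 : b1 ≠ a1 := c11.symm
  have d12 : b1 ≠ a2 := c21.symm
  have d13 : b1 ≠ a3 := c31.symm
  have d21 : b2 ≠ a1 := c12.symm
  have d22 : b2 ≠ a2 := c22.symm
  have d23 : b2 ≠ a3 := c32.symm
  have d31 : b3 ≠ a1 := c13.symm
  have d32 : b3 ≠ a2 := c23.symm
  have d33 : b3 ≠ a3 := c33.symm
  have ha21 : a2 ≠ a1 := ha12.symm
  have ha31 : a3 ≠ a1 := ha13.symm
  have ha32 : a3 ≠ a2 := ha23.symm
  have hb21 : b2 ≠ b1 := hb12.symm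
  have hb31 : b3 ≠ b1 := hb13.symm
  have hb32 : b3 ≠ b2 := hb23.symm
  refine ⟨![a1, a2, a3], ![b1, b2, b3], ?_, ?_⟩
  · intro i
    fin_cases i
    · exact h1
    · exact h2
    · exact h3
  · intro i j hij
    fin_cases i <;> fin_cases j <;> simp_all

/-- Inner step of the König-style case analysis. -/
lemma mcross_inner {G : SimpleGraph V} {V1 V2 : Set V} (hdisj : Disjoint V1 V2)
    (H : ∀ s t : V, ∃ a b : V, MCross G V1 V2 a b ∧ a ≠ s ∧ a ≠ t ∧ b ≠ s ∧ b ≠ t)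
    {a1 b1 a2 b2 x1 : V}
    (e1 : MCross G V1 V2 a1 b1) (e2 : MCross G V1 V2 a2 b2) (f1 : MCross G V1 V2 x1 b1)
    (ha : a1 ≠ a2) (hb : b1 ≠ b2) (hx1 : x1 ≠ a1) (hx2 : x1 ≠ a2) :
    ECSS.HasMatchingBetween G V1 V2 3 := by
  obtain ⟨x2, y2, c2, _, _, hy2b1, hy2b2⟩ := H b1 b2
  by_cases h1 : x2 = a1
  · subst h1
    -- matching (x1,b1), (a1,y2), (a2,b2)
    exact mcross_build hdisj f1 c2 e2 hx1 hx2 ha hy2b1.symm hb hy2b2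
  by_cases h2 : x2 = a2
  · subst h2
    obtain ⟨x4, y4, c4, hx4a2, -, -, hy4b1⟩ := H x2 b1
    by_cases h3 : x4 = a1
    · subst h3
      by_cases h4 : y4 = b2
      · subst h4
        -- matching (x4,y4), (x1,b1), (x2,y2)
        exact mcross_build hdisj c4 f1 c2 hx1.symm ha hx2
          hy4b1 hy2b2.symm hy2b1.symm
      · -- matching (x4,y4), (x1,b1), (x2,b2)
        exact mcross_build hdisj c4 f1 e2 hx1.symm ha hx2 hy4b1 h4 hb
    · by_cases h4 : y4 = b2
      · subst h4
        -- matching (x4,y4), (a1,b1), (x2,y2)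
        exact mcross_build hdisj c4 e1 c2 h3 hx4a2 ha
          hy4b1 hy2b2.symm hy2b1.symm
      · -- matching (a1,b1), (x2,b2), (x4,y4)
        exact mcross_build hdisj e1 e2 c4 ha (fun h => h3 h.symm) (fun h => hx4a2 h.symm)
          hb (fun h => hy4b1 h.symm) (fun h => h4 h.symm)
  · -- matching (a1,b1), (a2,b2), (x2,y2)
    exact mcross_build hdisj e1 e2 c2 ha (fun h => h1 h.symm) (fun h => h2 h.symm)
      hb (fun h => hy2b1 h.symm) (fun h => hy2b2 h.symm)

/-- If no pair of vertices covers all crossing edges, there is a 3-matching. -/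
lemma mcross_main {G : SimpleGraph V} {V1 V2 : Set V} (hdisj : Disjoint V1 V2)
    [Nonempty V]
    (H : ∀ s t : V, ∃ a b : V, MCross G V1 V2 a b ∧ a ≠ s ∧ a ≠ t ∧ b ≠ s ∧ b ≠ t) :
    ECSS.HasMatchingBetween G V1 V2 3 := by
  obtain ⟨a1, b1, e1, -, -, -, -⟩ := H (Classical.arbitrary V) (Classical.arbitrary V)
  obtain ⟨a2, b2, e2, ha21, -, -, hb2b1⟩ := H a1 b1
  obtain ⟨x1, y1, f, hxa1, hxa2, -, -⟩ := H a1 a2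
  by_cases hy1 : y1 = b1
  · subst hy1
    exact mcross_inner hdisj H e1 e2 f ha21.symm hb2b1.symm hxa1 hxa2
  by_cases hy2 : y1 = b2
  · subst hy2
    exact mcross_inner hdisj H e2 e1 f ha21 hb2b1 hxa2 hxa1
  · exact mcross_build hdisj e1 e2 f ha21.symm hxa1.symm hxa2.symm
      hb2b1.symm (fun h => hy1 h.symm) (fun h => hy2 h.symm)

/-- Along any walk from a vertex satisfying `P` to one that doesn't,
there is an edge crossing `P`. -/
lemma walk_cross {W : Type*} {Γ : SimpleGraph W} (P : W → Prop) :
    ∀ {u v : W}, Γ.Walk u v → P u → ¬ P v → ∃ x y, Γ.Adj x y ∧ P x ∧ ¬ P y := by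
  intro u v w
  induction w with
  | nil => intro h h'; exact absurd h h'
  | cons h p ih =>
    rename_i u' a v'
    intro hu hv
    by_cases ha : P a
    · exact ih ha hv
    · exact ⟨u', a, h, hu, ha⟩

lemma card_cc_one {W : Type*} {Γ : SimpleGraph W} (h : Γ.Connected) :
    Nat.card Γ.ConnectedComponent = 1 := by
  have hne : Nonempty W := h.nonempty
  rw [Nat.card_eq_one_iff_unique]
  constructor
  · constructor
    intro a b
    refine SimpleGraph.ConnectedComponent.ind₂ (fun u v => ?_) a b
    exact SimpleGraph.ConnectedComponent.sound (h.preconnected u v)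
  · exact ⟨Γ.connectedComponentMk (Classical.arbitrary W)⟩

lemma two_elems {α : Type*} [Finite α] (h : Nat.card α = 2) {x y : α} (hxy : x ≠ y) :
    ∀ a : α, a = x ∨ a = y := by
  obtain ⟨x', y', hxy', huniv⟩ := Nat.card_eq_two_iff.mp h
  have hmem : ∀ a : α, a = x' ∨ a = y' := by
    intro a
    have : a ∈ ({x', y'} : Set α) := huniv ▸ Set.mem_univ a
    simpa using this
  intro a
  rcases hmem a with ha | ha <;> rcases hmem x with hx | hx <;> rcases hmem y with hy | hy <;>
    subst_vars <;> tauto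

/-- In a graph with exactly two connected components where the component of `z`
has support `{z}`, any vertex on `z`'s "side" equals `z`. -/
lemma side_step {W : Type*} [Finite W] {Γ : SimpleGraph W}
    (hcard2 : Nat.card Γ.ConnectedComponent = 2)
    {c : Γ.ConnectedComponent} {z : W} (hz : c.supp = {z}) {A B : W → Prop}
    {q : W} (hq : B q) (hzA : A z)
    (noAB : ∀ x y : W, A x → B y → ¬ Γ.Reachable x y) :
    ∀ w : W, A w → w = z := by
  have hzq : Γ.connectedComponentMk z ≠ Γ.connectedComponentMk q := by
    intro h
    exact noAB z q hzA hq (SimpleGraph.ConnectedComponent.exact h)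
  have hzc : Γ.connectedComponentMk z = c := by
    have : z ∈ c.supp := hz ▸ Set.mem_singleton z
    exact (SimpleGraph.ConnectedComponent.mem_supp_iff _ _).mp this
  intro w hw
  rcases two_elems hcard2 hzq (Γ.connectedComponentMk w) with h | h
  · have : w ∈ c.supp := (SimpleGraph.ConnectedComponent.mem_supp_iff _ _).mpr (h.trans hzc)
    simpa [hz] using this
  · exact absurd (SimpleGraph.ConnectedComponent.exact h) (noAB w q hw hq)

end ThreeMatchAux

/-- 3-Matching Lemma: Let `G` be a 2-vertex-connected simple graph
without irrelevant edges and without non-isolating 2-vertex cuts. Let `(V1, V2)` be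
a partition of `V(G)` with `|Vi| ≥ 3`, such that if `|Vi| = 3` then `G[Vi]` is a
triangle. Then there exists a matching of size 3 between `V1` and `V2` in `G`. -/
theorem statement_2 {V : Type*} [Fintype V] [DecidableEq V] (G : SimpleGraph V)
    (h2vc : ECSS.TwoVertexConnected G)
    (hirr : ∀ x y : V, ¬ ECSS.IsIrrelevantEdge G x y)
    (hni : ∀ S : Set V, ¬ ECSS.IsNonIsolating2Cut G S)
    (V1 V2 : Set V) (hunion : V1 ∪ V2 = Set.univ) (hdisj : Disjoint V1 V2)
    (h1 : 3 ≤ V1.ncard) (h2 : 3 ≤ V2.ncard)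
    (ht1 : V1.ncard = 3 → ∀ x ∈ V1, ∀ y ∈ V1, x ≠ y → G.Adj x y)
    (ht2 : V2.ncard = 3 → ∀ x ∈ V2, ∀ y ∈ V2, x ≠ y → G.Adj x y) :
    ECSS.HasMatchingBetween G V1 V2 3 := by
  have hV1ne : V1.Nonempty := Set.nonempty_of_ncard_ne_zero (by omega)
  haveI : Nonempty V := ⟨hV1ne.choose⟩
  by_cases HC : ∀ s t : V, ∃ a b : V, MCross G V1 V2 a b ∧ a ≠ s ∧ a ≠ t ∧ b ≠ s ∧ b ≠ t
  · exact mcross_main hdisj HC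
  push_neg at HC
  obtain ⟨s, t, hcov0⟩ := HC
  have hcov : ∀ a b : V, MCross G V1 V2 a b → a = s ∨ a = t ∨ b = s ∨ b = t := by
    intro a b hc
    by_contra hno
    push_neg at hno
    exact hno.2.2.2 (hcov0 a b hc hno.1 hno.2.1 hno.2.2.1)
  exfalso
  set S : Set V := {s, t} with hS
  set Γ := G.induce Sᶜ with hΓ
  have nocross : ∀ x y : ↥Sᶜ, G.Adj x y → (x : V) ∈ V1 → (y : V) ∈ V2 → False := by
    intro x y hadj hx hy
    have hxS : (x : V) ∉ S := x.2
    have hyS : (y : V) ∉ S := y.2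
    rcases hcov x y ⟨hx, hy, hadj⟩ with h | h | h | h
    · exact hxS (by simp [hS, h])
    · exact hxS (by simp [hS, h])
    · exact hyS (by simp [hS, h])
    · exact hyS (by simp [hS, h])
  have noreach12 : ∀ x y : ↥Sᶜ, (x : V) ∈ V1 → (y : V) ∈ V2 → ¬ Γ.Reachable x y := by
    intro x y hx hy hr
    obtain ⟨w⟩ := hr
    obtain ⟨p, q, hadj, hp, hq⟩ := walk_cross (fun z : ↥Sᶜ => (z : V) ∈ V1) w hx
      (fun h => (Set.disjoint_left.mp hdisj h) hy)
    have hq2 : (q : V) ∈ V2 := by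
      have hmem : (q : V) ∈ V1 ∪ V2 := hunion ▸ Set.mem_univ _
      rcases hmem with h | h
      · exact absurd h hq
      · exact h
    exact nocross p q hadj hp hq2
  have noreach21 : ∀ x y : ↥Sᶜ, (x : V) ∈ V2 → (y : V) ∈ V1 → ¬ Γ.Reachable x y :=
    fun x y hx hy h => noreach12 y x hy hx h.symm
  have hS2le : S.ncard ≤ 2 := by
    calc S.ncard ≤ ({t} : Set V).ncard + 1 := Set.ncard_insert_le _ _
      _ = 2 := by simp
  have hd1 : (V1 \ S).Nonempty := by
    by_contra h
    rw [Set.not_nonempty_iff_eq_empty, Set.diff_eq_empty] at h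
    have := Set.ncard_le_ncard h (Set.toFinite S)
    omega
  have hd2 : (V2 \ S).Nonempty := by
    by_contra h
    rw [Set.not_nonempty_iff_eq_empty, Set.diff_eq_empty] at h
    have := Set.ncard_le_ncard h (Set.toFinite S)
    omega
  obtain ⟨p1, hp1⟩ := hd1
  obtain ⟨p2, hp2⟩ := hd2
  set z1 : ↥Sᶜ := ⟨p1, Set.mem_compl hp1.2⟩ with hz1def
  set z2 : ↥Sᶜ := ⟨p2, Set.mem_compl hp2.2⟩ with hz2def
  have hG1 : ECSS.numComponents G = 1 := card_cc_one h2vc.1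
  have hnt : 1 < ECSS.numComponents Γ := by
    rw [ECSS.numComponents, Finite.one_lt_card_iff_nontrivial]
    exact ⟨Γ.connectedComponentMk z1, Γ.connectedComponentMk z2,
      fun h => noreach12 z1 z2 hp1.1 hp2.1 (SimpleGraph.ConnectedComponent.exact h)⟩
  have hcut : ECSS.IsCutSet G S := by
    rw [ECSS.IsCutSet, hG1]
    exact hnt
  by_cases hst : s = t
  · subst hst
    have hSs : S = {s} := by simp [hS]
    exact h2vc.2 s (hSs ▸ hcut)
  have hSnc : S.ncard = 2 := Set.ncard_pair hst
  have hvc : ECSS.IsVertexCut G S 2 := ⟨hSnc, hcut⟩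
  have hiso : ECSS.IsIsolating2Cut G S := by
    by_contra h
    exact hni S ⟨hvc, h⟩
  obtain ⟨-, hcard2, c, hc1⟩ := hiso
  obtain ⟨z, hzsupp⟩ := Set.ncard_eq_one.mp hc1
  have hz1or2 : (z : V) ∈ V1 ∨ (z : V) ∈ V2 := by
    have hmem : (z : V) ∈ V1 ∪ V2 := hunion ▸ Set.mem_univ _
    exact hmem
  have h3le : ({s, t, (z : V)} : Set V).ncard ≤ 3 := by
    calc ({s, t, (z : V)} : Set V).ncard ≤ ({t, (z : V)} : Set V).ncard + 1 :=
        Set.ncard_insert_le _ _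
      _ ≤ (({(z : V)} : Set V).ncard + 1) + 1 :=
        Nat.add_le_add_right (Set.ncard_insert_le _ _) 1
      _ = 3 := by simp
  rcases hz1or2 with hzA | hzA
  · have hall : ∀ w : ↥Sᶜ, (w : V) ∈ V1 → w = z :=
      side_step (B := fun w : ↥Sᶜ => (w : V) ∈ V2) (q := z2) hcard2 hzsupp hp2.1 hzA noreach12
    have hsub : V1 ⊆ {s, t, (z : V)} := by
      intro v hv
      by_cases hvS : v ∈ S
      · rcases hvS with h | h
        · exact Or.inl h
        · exact Or.inr (Or.inl h)
      · have hvz := hall ⟨v, Set.mem_compl hvS⟩ hv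
        exact Or.inr (Or.inr (by
          have := congrArg Subtype.val hvz
          simpa using this))
    have hV1eq : V1 = {s, t, (z : V)} :=
      Set.eq_of_subset_of_ncard_le hsub (by omega) (Set.toFinite _)
    have hcard3 : V1.ncard = 3 := by
      have hle : V1.ncard ≤ 3 := by rw [hV1eq]; exact h3le
      omega
    have hadjst : G.Adj s t :=
      ht1 hcard3 s (by rw [hV1eq]; simp) t (by rw [hV1eq]; simp) hst
    exact hirr s t ⟨hadjst, hvc⟩
  · have hall : ∀ w : ↥Sᶜ, (w : V) ∈ V2 → w = z :=
      side_step (B := fun w : ↥Sᶜ => (w : V) ∈ V1) (q := z1) hcard2 hzsupp hp1.1 hzA noreach21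
    have hsub : V2 ⊆ {s, t, (z : V)} := by
      intro v hv
      by_cases hvS : v ∈ S
      · rcases hvS with h | h
        · exact Or.inl h
        · exact Or.inr (Or.inl h)
      · have hvz := hall ⟨v, Set.mem_compl hvS⟩ hv
        exact Or.inr (Or.inr (by
          have := congrArg Subtype.val hvz
          simpa using this))
    have hV2eq : V2 = {s, t, (z : V)} :=
      Set.eq_of_subset_of_ncard_le hsub (by omega) (Set.toFinite _)
    have hcard3 : V2.ncard = 3 := by
      have hle : V2.ncard ≤ 3 := by rw [hV2eq]; exact h3le
      omega
    have hadjst : G.Adj s t :=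
      ht2 hcard3 s (by rw [hV2eq]; simp) t (by rw [hV2eq]; simp) hst
    exact hirr s t ⟨hadjst, hvc⟩
end

section
/- Let G be a 2-vertex-connected simple graph without irrelevant edges and without non-isolating 2-vertex cuts, and let H be a bridgeless canonical 2-edge cover of G. Let A and B be adjacent nodes in the component graph Ĝ_H such that A is a trivial segment. Then there exists a matching of size 3 between V(C_A) and V(C_B) in G. -/
open SimpleGraph

open scoped Classical

namespace ECSS
section AuxGeneric


variable {N : Type*}

instance finite_subgraph {V : Type*} [Finite V] {G : SimpleGraph V} : Finite (G.Subgraph) :=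
  Finite.of_injective (fun K => (K.verts, K.Adj))
    (fun _ _ h => SimpleGraph.Subgraph.ext (congrArg Prod.fst h) (congrArg Prod.snd h))

lemma nc_one {Γ : SimpleGraph N} (h : Γ.Connected) : numComponents Γ = 1 := by
  have hs : Subsingleton Γ.ConnectedComponent := ⟨fun a b => by
    refine ConnectedComponent.ind (fun x => ConnectedComponent.ind (fun y => ?_) b) a
    exact ConnectedComponent.sound (h.preconnected x y)⟩
  have hn : Nonempty Γ.ConnectedComponent := ⟨Γ.connectedComponentMk (Classical.choice h.nonempty)⟩
  exact Nat.card_eq_one_iff_unique.mpr ⟨hs, hn⟩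

lemma end_mem_support_tail {Γ : SimpleGraph N} {z : N} (p : Γ.Walk z z) (hp : ¬p.Nil) :
    z ∈ p.support.tail := by
  obtain ⟨u, h, q, rfl⟩ := Walk.not_nil_iff.mp hp
  simpa using q.end_mem_support

lemma cycle_not_nil {Γ : SimpleGraph N} {z : N} {p : Γ.Walk z z} (hp : p.IsCycle) : ¬p.Nil := by
  intro h
  have := hp.three_le_length
  rw [Walk.nil_iff_length_eq.mp h] at this
  omega

lemma mem_support_rotate_iff [DecidableEq N] {Γ : SimpleGraph N} {z u n : N} {c : Γ.Walk z z}
    (hc : ¬c.Nil) (hu : u ∈ c.support) (hrot : ¬(c.rotate _ hu).Nil) :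
    n ∈ (c.rotate _ hu).support ↔ n ∈ c.support := by
  have h1 := end_mem_support_tail c hc
  have h2 := end_mem_support_tail (c.rotate _ hu) hrot
  have hperm : n ∈ (c.rotate _ hu).support.tail ↔ n ∈ c.support.tail :=
    (Walk.support_rotate c _ hu).mem_iff
  rw [Walk.mem_support_iff, Walk.mem_support_iff]
  constructor
  · rintro (rfl | h)
    · right; rwa [← hperm]
    · right; rwa [← hperm]
  · rintro (rfl | h)
    · right; rwa [hperm]
    · right; rwa [hperm]

/-- transfer a walk into an induced subgraph -/
lemma reach_induce_of_walk {Γ : SimpleGraph N} {T : Set N} :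
    ∀ {x y : N} (p : Γ.Walk x y), (∀ a ∈ p.support, a ∈ T) →
      ∀ (hx : x ∈ T) (hy : y ∈ T), (Γ.induce T).Reachable ⟨x, hx⟩ ⟨y, hy⟩
  | x, _, Walk.nil, _, hx, hy => Reachable.refl _
  | x, y, Walk.cons (v := b) h p, hs, hx, hy => by
      have hb : b ∈ T := hs b (by simp)
      have hadj : (Γ.induce T).Adj ⟨x, hx⟩ ⟨b, hb⟩ := h
      exact hadj.reachable.trans
        (reach_induce_of_walk p (fun a ha => hs a (by simp [ha])) hb hy)

/-- transfer a walk into a doubly induced subgraph, avoiding a vertex -/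
lemma reach_induce2_of_walk {Γ : SimpleGraph N} {T : Set N} {v : ↥T} :
    ∀ {x y : N} (p : Γ.Walk x y), (∀ a ∈ p.support, a ∈ T) → (∀ a ∈ p.support, a ≠ v.1) →
      ∀ (hx : x ∈ T) (hx' : (⟨x, hx⟩ : ↥T) ∈ ({v}ᶜ : Set ↥T))
        (hy : y ∈ T) (hy' : (⟨y, hy⟩ : ↥T) ∈ ({v}ᶜ : Set ↥T)),
      ((Γ.induce T).induce ({v}ᶜ : Set ↥T)).Reachable ⟨⟨x, hx⟩, hx'⟩ ⟨⟨y, hy⟩, hy'⟩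
  | x, _, Walk.nil, _, _, hx, hx', hy, hy' => Reachable.refl _
  | x, y, Walk.cons (v := b) h p, hs, hv, hx, hx', hy, hy' => by
      have hb : b ∈ T := hs b (by simp)
      have hb' : (⟨b, hb⟩ : ↥T) ∈ ({v}ᶜ : Set ↥T) := by
        intro hmem
        exact hv b (by simp) (congrArg Subtype.val (Set.mem_singleton_iff.mp hmem))
      have hadj : ((Γ.induce T).induce ({v}ᶜ : Set ↥T)).Adj ⟨⟨x, hx⟩, hx'⟩ ⟨⟨b, hb⟩, hb'⟩ := h
      exact hadj.reachable.trans
        (reach_induce2_of_walk p (fun a ha => hs a (by simp [ha]))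
          (fun a ha => hv a (by simp [ha])) hb hb' hy hy')


/-- main cycle lemma: a cycle through `A` yields a non-trivial segment containing `A`. -/
lemma exists_seg_of_cycle [Finite N] {Γ : SimpleGraph N} {A : N}
    (c : Γ.Walk A A) (hc : c.IsCycle) : ∃ S : Set N, IsNontrivialSegment Γ S ∧ A ∈ S := by
  classical
  set S₀ : Set N := {n | n ∈ c.support} with hS₀
  have hAS : A ∈ S₀ := c.start_mem_support
  -- cardinality
  have h3 : 3 ≤ S₀.ncard := by
    have hsub : {n | n ∈ c.support.tail} ⊆ S₀ := fun n hn => List.mem_of_mem_tail hn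
    have htl : {n | n ∈ c.support.tail} = ↑c.support.tail.toFinset := by
      ext n; simp
    have hcard : ({n | n ∈ c.support.tail} : Set N).ncard = c.support.tail.length := by
      rw [htl, Set.ncard_coe_finset, List.toFinset_card_of_nodup hc.support_nodup]
    have hlen : c.support.tail.length = c.length := by
      have := c.length_support; simp [List.length_tail, this]
    have := Set.ncard_le_ncard hsub (Set.toFinite _)
    rw [hcard, hlen] at this
    have h3l := hc.three_le_length
    omega
  -- support subsets
  have hsupp : ∀ a ∈ c.support, a ∈ S₀ := fun a ha => ha
  -- connectedness of the induced graph
  have hconn : (Γ.induce S₀).Connected := by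
    rw [connected_iff]
    constructor
    · have hreach : ∀ (n : N) (hn : n ∈ S₀), (Γ.induce S₀).Reachable ⟨A, hAS⟩ ⟨n, hn⟩ := by
        intro n hn
        exact reach_induce_of_walk (c.takeUntil n hn)
          (fun a ha => hsupp a (c.support_takeUntil_subset hn ha)) hAS hn
      rintro ⟨n, hn⟩ ⟨m, hm⟩
      exact (hreach n hn).symm.trans (hreach m hm)
    · exact ⟨⟨A, hAS⟩⟩
  have hnc1 : numComponents (Γ.induce S₀) = 1 := nc_one hconn
  -- no cut vertex
  have h2vc : TwoVertexConnected (Γ.induce S₀) := by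
    refine ⟨hconn, ?_⟩
    intro v hcut
    -- show the doubly induced graph is connected
    have hu : v.1 ∈ c.support := v.2
    have hcnil : ¬c.Nil := cycle_not_nil hc
    set c' := c.rotate _ hu with hc'def
    have hc' : c'.IsCycle := hc.rotate hu
    have hc'nil : ¬c'.Nil := cycle_not_nil hc'
    obtain ⟨w0, hadj0, q, hq⟩ := Walk.not_nil_iff.mp hc'nil
    have hqpath : q.IsPath ∧ ¬s(v.1, w0) ∈ q.edges := by
      rw [hq] at hc'
      exact (Walk.cons_isCycle_iff q hadj0).mp hc'
    have hmemc' : ∀ n, n ∈ c'.support ↔ n ∈ c.support := fun n =>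
      mem_support_rotate_iff hcnil hu hc'nil
    have hqsub : ∀ a ∈ q.support, a ∈ S₀ := by
      intro a ha
      have : a ∈ c'.support := by rw [hq, Walk.support_cons]; exact List.mem_cons_of_mem _ ha
      exact hsupp a ((hmemc' a).mp this)
    have hw0S : w0 ∈ S₀ := hqsub w0 q.start_mem_support
    have hw0v : w0 ≠ v.1 := hadj0.ne'
    have hw0' : (⟨w0, hw0S⟩ : ↥S₀) ∈ ({v}ᶜ : Set ↥S₀) := by
      intro hmem
      exact hw0v (congrArg Subtype.val (Set.mem_singleton_iff.mp hmem))
    -- every other vertex reaches w0 in the doubly induced graph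
    have hreach : ∀ (b : ↥({v}ᶜ : Set ↥S₀)),
        ((Γ.induce S₀).induce ({v}ᶜ : Set ↥S₀)).Reachable ⟨⟨w0, hw0S⟩, hw0'⟩ b := by
      rintro ⟨⟨n, hnS⟩, hnv⟩
      have hnv' : n ≠ v.1 := by
        intro h; exact hnv (Set.mem_singleton_iff.mpr (Subtype.ext h))
      have hnc' : n ∈ c'.support := (hmemc' n).mpr hnS
      have hnq : n ∈ q.support := by
        rw [hq, Walk.support_cons] at hnc'
        rcases List.mem_cons.mp hnc' with h | h
        · exact absurd h hnv'
        · exact h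
      -- the takeUntil walk avoids v.1
      set t := q.takeUntil n hnq with htdef
      have htS : ∀ a ∈ t.support, a ∈ S₀ := fun a ha =>
        hqsub a (q.support_takeUntil_subset hnq ha)
      have htv : ∀ a ∈ t.support, a ≠ v.1 := by
        intro a ha hav
        rw [htdef] at ha
        have hvdrop : v.1 ∈ (q.dropUntil n hnq).support.tail :=
          Walk.end_mem_tail_support_of_ne hnv' (q.dropUntil n hnq)
        have hnodup : q.support.Nodup := hqpath.1.support_nodup
        rw [← q.take_spec hnq, Walk.support_append] at hnodup
        have hdisj := (List.nodup_append.mp hnodup).2.2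
        exact hdisj _ ha _ hvdrop hav
      exact reach_induce2_of_walk t htS htv hw0S hw0' hnS
        (by intro hmem; exact hnv' (congrArg Subtype.val (Set.mem_singleton_iff.mp hmem)))
    have hconn2 : ((Γ.induce S₀).induce ({v}ᶜ : Set ↥S₀)).Connected := by
      rw [connected_iff]
      exact ⟨fun a b => (hreach a).symm.trans (hreach b), ⟨⟨⟨w0, hw0S⟩, hw0'⟩⟩⟩
    rw [IsCutSet, hnc1, nc_one hconn2] at hcut
    omega
  -- maximal extension
  obtain ⟨Sm, hSm, hmax⟩ := Set.Finite.exists_maximalFor id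
    {S' : Set N | S₀ ⊆ S' ∧ TwoVertexConnected (Γ.induce S')} (Set.toFinite _)
    ⟨S₀, subset_rfl, h2vc⟩
  refine ⟨Sm, ⟨le_trans h3 (Set.ncard_le_ncard hSm.1 (Set.toFinite _)), hSm.2, ?_⟩, hSm.1 hAS⟩
  intro S'' hsub h2
  exact Set.Subset.antisymm (hmax ⟨hSm.1.trans hsub, h2⟩ hsub) hsub


end AuxGeneric
end ECSS

namespace ECSS
section AuxComp

open SimpleGraph

variable {V : Type*} [Fintype V] [DecidableEq V] {G : SimpleGraph V} {H C D : G.Subgraph}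

lemma subgraphOfAdj_le {a b : V} (h : H.Adj a b) : G.subgraphOfAdj (H.adj_sub h) ≤ H := by
  constructor
  · intro x hx
    rcases hx with h1 | h2
    · exact h1 ▸ H.edge_vert h
    · exact h2 ▸ H.edge_vert h.symm
  · intro x y hxy
    simp only [subgraphOfAdj_adj] at hxy
    rw [Sym2.eq_iff] at hxy
    rcases hxy with ⟨rfl, rfl⟩ | ⟨rfl, rfl⟩
    · exact h
    · exact h.symm

lemma comp_adj_of_mem (hC : IsComponent H C) {x y : V}
    (hx : x ∈ C.verts) (hxy : H.Adj x y) : C.Adj x y := by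
  have hsub : G.subgraphOfAdj (H.adj_sub hxy) ≤ H := subgraphOfAdj_le hxy
  have hconn : (C ⊔ G.subgraphOfAdj (H.adj_sub hxy)).Connected :=
    Subgraph.connected_sup hC.2.1.preconnected (Subgraph.subgraphOfAdj_connected _).preconnected ⟨x, hx, by simp⟩
  have heq : C ⊔ G.subgraphOfAdj (H.adj_sub hxy) = C :=
    hC.2.2 _ le_sup_left (sup_le hC.1 hsub) hconn
  have hadj : (C ⊔ G.subgraphOfAdj (H.adj_sub hxy)).Adj x y :=
    Subgraph.sup_adj.mpr (Or.inr (by simp))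
  rwa [heq] at hadj

lemma comp_disjoint (hC : IsComponent H C) (hD : IsComponent H D) (hne : C ≠ D) :
    ∀ x, x ∈ C.verts → x ∉ D.verts := by
  intro x hxC hxD
  have hconn : (C ⊔ D).Connected := Subgraph.connected_sup hC.2.1.preconnected hD.2.1.preconnected ⟨x, hxC, hxD⟩
  have h1 := hC.2.2 _ le_sup_left (sup_le hC.1 hD.1) hconn
  have h2 := hD.2.2 _ le_sup_right (sup_le hC.1 hD.1) hconn
  exact hne (h1.symm.trans h2)

lemma walk_in_comp (hC : IsComponent H C) (s : Set (Sym2 V)) :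
    ∀ {x y : V}, (H.deleteEdges s).spanningCoe.Walk x y → x ∈ C.verts →
      (C.deleteEdges s).spanningCoe.Reachable x y
  | _, _, Walk.nil, _ => Reachable.refl _
  | x, y, Walk.cons (v := b) h p, hx => by
      have h' : H.Adj x b ∧ s(x, b) ∉ s := by
        simpa [Subgraph.deleteEdges_adj] using h
      have hCadj : C.Adj x b := comp_adj_of_mem hC hx h'.1
      have hb : b ∈ C.verts := C.edge_vert hCadj.symm
      have hadj : (C.deleteEdges s).spanningCoe.Adj x b := by
        simp only [Subgraph.spanningCoe_adj, Subgraph.deleteEdges_adj]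
        exact ⟨hCadj, h'.2⟩
      exact hadj.reachable.trans (walk_in_comp hC s p hb)

lemma comp_not_hasBridge (hbl : Bridgeless H) (hC : IsComponent H C) : ¬ HasBridge C := by
  rintro ⟨e, heC, hbr⟩
  induction e using Sym2.ind with
  | _ a b =>
    have hadj : C.Adj a b := Subgraph.mem_edgeSet.mp heC
    have heH : s(a, b) ∈ H.edgeSet := Subgraph.mem_edgeSet.mpr (hC.1.2 hadj)
    have hne := hbl s(a, b)
    rw [IsBridgeIn, not_and] at hne
    have h2 := hne heH
    push_neg at h2
    obtain ⟨a', b', he, hr⟩ := h2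
    have hrab : (H.deleteEdges {s(a, b)}).spanningCoe.Reachable a b := by
      rw [Sym2.eq_iff] at he
      rcases he with ⟨rfl, rfl⟩ | ⟨rfl, rfl⟩
      · exact hr
      · exact hr.symm
    obtain ⟨w⟩ := hrab
    exact hbr a b rfl (walk_in_comp hC _ w (C.edge_vert hadj))

lemma comp_nbr_subset (hC : IsComponent H C) {v : V} (hv : v ∈ C.verts) :
    H.neighborSet v ⊆ C.neighborSet v := fun _ hw => comp_adj_of_mem hC hv hw

lemma comp_nbr_subset' {v : V} : C.neighborSet v ⊆ C.verts \ {v} := by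
  intro w hw
  exact ⟨C.edge_vert (Subgraph.adj_symm _ hw), fun h => (C.adj_sub hw).ne' (h ▸ rfl)⟩

lemma comp_verts_four (hcov : IsTwoEdgeCover H) (hcan : IsCanonical H) (hbl : Bridgeless H)
    (hC : IsComponent H C) : 4 ≤ C.verts.ncard := by
  have hnb := comp_not_hasBridge hbl hC
  have hv3 : 3 ≤ C.verts.ncard := by
    obtain ⟨v, hv⟩ := (Subgraph.connected_iff.mp hC.2.1).2
    have h2 : 2 ≤ (C.neighborSet v).ncard :=
      le_trans (hcov.2 v) (Set.ncard_le_ncard (comp_nbr_subset hC hv) (Set.toFinite _))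
    have hvn : v ∉ C.neighborSet v := fun h => (C.adj_sub h).ne rfl
    have hsub : insert v (C.neighborSet v) ⊆ C.verts := by
      intro w hw
      rcases hw with rfl | hw
      · exact hv
      · exact (comp_nbr_subset' hw).1
    have := Set.ncard_le_ncard hsub (Set.toFinite _)
    rw [Set.ncard_insert_of_notMem hvn (Set.toFinite _)] at this
    omega
  rcases hcan.1 C hC hnb with ⟨i, h4, _, hcyc⟩ | h8
  · rw [hcyc.2.1]; exact h4
  · by_contra hlt
    push_neg at hlt
    have h3 : C.verts.ncard = 3 := by omega
    obtain ⟨p, q, r, hpq, hpr, hqr, hverts⟩ := Set.ncard_eq_three.mp h3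
    have hEsub : C.edgeSet ⊆ ({s(p, q), s(p, r), s(q, r)} : Set (Sym2 V)) := by
      intro e he
      induction e using Sym2.ind with
      | _ a b =>
        have hadj : C.Adj a b := Subgraph.mem_edgeSet.mp he
        have ha : a ∈ C.verts := C.edge_vert hadj
        have hb : b ∈ C.verts := C.edge_vert hadj.symm
        have hne : a ≠ b := (C.adj_sub hadj).ne
        rw [hverts] at ha hb
        simp only [Set.mem_insert_iff, Set.mem_singleton_iff] at ha hb ⊢
        rcases ha with rfl | rfl | rfl <;> rcases hb with rfl | rfl | rfl <;>
          simp_all [Sym2.eq_iff]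
    have hle : C.edgeSet.ncard ≤ 3 := by
      refine le_trans (Set.ncard_le_ncard hEsub (Set.toFinite _)) ?_
      refine le_trans (Set.ncard_insert_le _ _) ?_
      have := Set.ncard_insert_le s(p, r) ({s(q, r)} : Set (Sym2 V))
      simp only [Set.ncard_singleton] at this ⊢
      omega
    omega

lemma compOf_le (K : G.Subgraph) (z : V) : compOf K z ≤ K :=
  ⟨fun _ hy => hy.1, fun _ _ h => h.1⟩

lemma mem_compOf_self {K : G.Subgraph} {z : V} (hz : z ∈ K.verts) : z ∈ (compOf K z).verts :=
  ⟨hz, Reachable.refl z⟩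

lemma coe_walk_spanningCoe {C : G.Subgraph} :
    ∀ {x y : C.verts}, C.coe.Walk x y → C.spanningCoe.Reachable x.1 y.1
  | _, _, Walk.nil => Reachable.refl _
  | x, y, Walk.cons (v := b) h p => by
      have hadj : C.spanningCoe.Adj x.1 b.1 := by
        simpa using h
      exact hadj.reachable.trans (coe_walk_spanningCoe p)

lemma reach_coe_compOf {K : G.Subgraph} {z : V} :
    ∀ {x y : V} (w : K.spanningCoe.Walk x y) (hx : x ∈ (compOf K z).verts)
      (hy : y ∈ (compOf K z).verts), (compOf K z).coe.Reachable ⟨x, hx⟩ ⟨y, hy⟩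
  | _, _, Walk.nil, hx, hy => Reachable.refl _
  | x, y, Walk.cons (v := b) h p, hx, hy => by
      have hKadj : K.Adj x b := by simpa using h
      have hbK : b ∈ K.verts := K.edge_vert hKadj.symm
      have hb : b ∈ (compOf K z).verts := ⟨hbK, hx.2.trans h.reachable⟩
      have hadj : (compOf K z).coe.Adj ⟨x, hx⟩ ⟨b, hb⟩ := by
        rw [Subgraph.coe_adj]
        exact ⟨hKadj, hx.2⟩
      exact hadj.reachable.trans (reach_coe_compOf p hb hy)

lemma compOf_connected {K : G.Subgraph} {z : V} (hz : z ∈ K.verts) :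
    (compOf K z).Connected := by
  rw [Subgraph.connected_iff]
  refine ⟨⟨?_⟩, ⟨z, mem_compOf_self hz⟩⟩
  rintro ⟨x, hx⟩ ⟨y, hy⟩
  obtain ⟨wx⟩ := hx.2
  obtain ⟨wy⟩ := hy.2
  exact (reach_coe_compOf wx (mem_compOf_self hz) hx).symm.trans
    (reach_coe_compOf wy (mem_compOf_self hz) hy)

lemma compOf_isComponent {K : G.Subgraph} {z : V} (hz : z ∈ K.verts) :
    IsComponent K (compOf K z) := by
  refine ⟨compOf_le K z, compOf_connected hz, ?_⟩
  intro C' h1 h2 h3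
  have hzC' : z ∈ C'.verts := h1.1 (mem_compOf_self hz)
  have hreach : ∀ x ∈ C'.verts, K.spanningCoe.Reachable z x := by
    intro x hx
    obtain ⟨w⟩ := h3.preconnected ⟨z, hzC'⟩ ⟨x, hx⟩

    have := coe_walk_spanningCoe w
    exact this.mono (fun a b hab => by simpa using h2.2 (by simpa using hab))
  have hle : C' ≤ compOf K z := by
    constructor
    · intro x hx
      exact ⟨h2.1 hx, hreach x hx⟩
    · intro x y hxy
      exact ⟨h2.2 hxy, hreach x (C'.edge_vert hxy)⟩
  exact le_antisymm hle h1

lemma comp_eq_compOf (hC : IsComponent H C) {x : V} (hx : x ∈ C.verts) :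
    compOf H x = C := by
  by_contra hne
  exact comp_disjoint (compOf_isComponent (hC.1.1 hx)) hC hne x
    (mem_compOf_self (hC.1.1 hx)) hx

end AuxComp
end ECSS


namespace ECSS
section AuxMatch

open SimpleGraph

variable {V : Type*} [Fintype V] [DecidableEq V] {G : SimpleGraph V}

lemma matching3 {VA VB : Set V} (hdisj : ∀ a ∈ VA, a ∉ VB)
    {p1 p2 p3 q1 q2 q3 : V}
    (h1 : p1 ∈ VA) (h1' : q1 ∈ VB) (e1 : G.Adj p1 q1)
    (h2 : p2 ∈ VA) (h2' : q2 ∈ VB) (e2 : G.Adj p2 q2)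
    (h3 : p3 ∈ VA) (h3' : q3 ∈ VB) (e3 : G.Adj p3 q3)
    (hp12 : p1 ≠ p2) (hp13 : p1 ≠ p3) (hp23 : p2 ≠ p3)
    (hq12 : q1 ≠ q2) (hq13 : q1 ≠ q3) (hq23 : q2 ≠ q3) :
    HasMatchingBetween G VA VB 3 := by
  have hpq : ∀ a ∈ VA, ∀ b ∈ VB, a ≠ b := fun a ha b hb h => hdisj a ha (h ▸ hb)
  refine ⟨![p1, p2, p3], ![q1, q2, q3], ?_, ?_⟩
  · intro i
    fin_cases i
    · exact ⟨h1, h1', e1⟩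
    · exact ⟨h2, h2', e2⟩
    · exact ⟨h3, h3', e3⟩
  · intro i j hij
    have d12 := hpq p1 h1 q2 h2'
    have d13 := hpq p1 h1 q3 h3'
    have d21 := hpq p2 h2 q1 h1'
    have d23 := hpq p2 h2 q3 h3'
    have d31 := hpq p3 h3 q1 h1'
    have d32 := hpq p3 h3 q2 h2'
    fin_cases i <;> fin_cases j <;>
      first
        | exact absurd rfl hij
        | exact ⟨hp12, hq12, d12, d21.symm⟩
        | exact ⟨hp13, hq13, d13, d31.symm⟩
        | exact ⟨hp23, hq23, d23, d32.symm⟩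
        | exact ⟨hp12.symm, hq12.symm, d21, d12.symm⟩
        | exact ⟨hp13.symm, hq13.symm, d31, d13.symm⟩
        | exact ⟨hp23.symm, hq23.symm, d32, d23.symm⟩

lemma cover_of_no_matching {VA VB : Set V}
    (hdisj : ∀ a ∈ VA, a ∉ VB) {a0 b0 : V} (ha0 : a0 ∈ VA) (hb0 : b0 ∈ VB) (h0 : G.Adj a0 b0)
    (hno : ¬ HasMatchingBetween G VA VB 3) :
    ∃ u v : V, u ≠ v ∧ ∀ a ∈ VA, ∀ b ∈ VB, G.Adj a b → a = u ∨ b = u ∨ a = v ∨ b = v := by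
  have hpq : ∀ a ∈ VA, ∀ b ∈ VB, a ≠ b := fun a ha b hb h => hdisj a ha (h ▸ hb)
  by_cases h2 : ∃ a1 ∈ VA, ∃ b1 ∈ VB, ∃ a2 ∈ VA, ∃ b2 ∈ VB,
      G.Adj a1 b1 ∧ G.Adj a2 b2 ∧ a1 ≠ a2 ∧ b1 ≠ b2
  · obtain ⟨a1, ha1, b1, hb1, a2, ha2, b2, hb2, e1, e2, hA12, hB12⟩ := h2
    by_contra hcon
    push_neg at hcon
    have hmeet : ∀ a ∈ VA, ∀ b ∈ VB, G.Adj a b → a = a1 ∨ a = a2 ∨ b = b1 ∨ b = b2 := by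
      intro a ha b hb hab
      by_contra hc
      push_neg at hc
      exact hno (matching3 hdisj ha1 hb1 e1 ha2 hb2 e2 ha hb hab hA12 (Ne.symm hc.1)
        (Ne.symm hc.2.1) hB12 (Ne.symm hc.2.2.1) (Ne.symm hc.2.2.2))
    obtain ⟨x1, hx1, y1, hy1, ey1, hne1⟩ := hcon b1 b2 hB12
    have hx1m : x1 = a1 ∨ x1 = a2 := by
      rcases hmeet x1 hx1 y1 hy1 ey1 with h | h | h | h
      · exact Or.inl h
      · exact Or.inr h
      · exact absurd h hne1.2.1
      · exact absurd h hne1.2.2.2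
    obtain ⟨x2, hx2, y2, hy2, ey2, hne2⟩ := hcon a1 a2 hA12
    have hy2m : y2 = b1 ∨ y2 = b2 := by
      rcases hmeet x2 hx2 y2 hy2 ey2 with h | h | h | h
      · exact absurd h hne2.1
      · exact absurd h hne2.2.2.1
      · exact Or.inl h
      · exact Or.inr h
    rcases hx1m with h | h <;> obtain rfl := h.symm
    all_goals rcases hy2m with h' | h' <;> obtain rfl := h'.symm
    · exact hno (matching3 hdisj hx1 hy1 ey1 hx2 hy2 ey2 ha2 hb2 e2
        (Ne.symm hne2.1) hA12 hne2.2.2.1 hne1.2.1 hne1.2.2.2 hB12)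
    · obtain ⟨x3, hx3, y3, hy3, ey3, hne3⟩ := hcon a1 b2 (hpq a1 ha1 b2 hb2)
      rcases hmeet x3 hx3 y3 hy3 ey3 with h | h | h | h
      · exact absurd h hne3.1
      · obtain rfl := h.symm
        by_cases hy3b1 : y3 = b1
        · obtain rfl := hy3b1.symm
          exact hno (matching3 hdisj hx1 hy1 ey1 hx2 hy2 ey2 hx3 hy3 ey3
            (Ne.symm hne2.1) hA12 hne2.2.2.1 hne1.2.2.2 hne1.2.1 hB12.symm)
        · exact hno (matching3 hdisj hx3 hy3 ey3 ha1 hb1 e1 hx2 hy2 ey2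
            hA12.symm hne2.2.2.1.symm (Ne.symm hne2.1) hy3b1 hne3.2.2.2 hB12)
      · obtain rfl := h.symm
        by_cases hx3a2 : x3 = a2
        · obtain rfl := hx3a2.symm
          exact hno (matching3 hdisj hx1 hy1 ey1 hx2 hy2 ey2 hx3 hy3 ey3
            (Ne.symm hne2.1) hA12 hne2.2.2.1 hne1.2.2.2 hne1.2.1 hB12.symm)
        · exact hno (matching3 hdisj hx1 hy1 ey1 ha2 hb2 e2 hx3 hy3 ey3
            hA12 (Ne.symm hne3.1) (Ne.symm hx3a2) hne1.2.2.2 hne1.2.1 hB12.symm)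
      · exact absurd h hne3.2.2.2
    · obtain ⟨x4, hx4, y4, hy4, ey4, hne4⟩ := hcon a2 b1 (hpq a2 ha2 b1 hb1)
      rcases hmeet x4 hx4 y4 hy4 ey4 with h | h | h | h
      · obtain rfl := h.symm
        by_cases hy4b2 : y4 = b2
        · obtain rfl := hy4b2.symm
          exact hno (matching3 hdisj hx1 hy1 ey1 hx2 hy2 ey2 hx4 hy4 ey4
            hne2.2.2.1.symm hA12.symm hne2.1 hne1.2.1 hne1.2.2.2 hB12)
        · exact hno (matching3 hdisj hx4 hy4 ey4 ha2 hb2 e2 hx2 hy2 ey2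
            hA12 (Ne.symm hne2.1) hne2.2.2.1.symm hy4b2 hne4.2.2.2 hB12.symm)
      · exact absurd h hne4.1
      · exact absurd h hne4.2.2.2
      · obtain rfl := h.symm
        by_cases hx4a1 : x4 = a1
        · obtain rfl := hx4a1.symm
          exact hno (matching3 hdisj hx1 hy1 ey1 hx2 hy2 ey2 hx4 hy4 ey4
            hne2.2.2.1.symm hA12.symm hne2.1 hne1.2.1 hne1.2.2.2 hB12)
        · exact hno (matching3 hdisj hx1 hy1 ey1 ha1 hb1 e1 hx4 hy4 ey4
            hA12.symm (Ne.symm hne4.1) (Ne.symm hx4a1) hne1.2.1 hne1.2.2.2 hB12)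
    · exact hno (matching3 hdisj hx1 hy1 ey1 hx2 hy2 ey2 ha1 hb1 e1
        hne2.2.2.1.symm hA12.symm hne2.1 hne1.2.2.2 hne1.2.1 hB12.symm)
  · push_neg at h2
    refine ⟨a0, b0, hpq a0 ha0 b0 hb0, ?_⟩
    intro a ha b hb hab
    by_contra hc
    push_neg at hc
    exact hc.2.2.2 (h2 a0 ha0 b0 hb0 a ha b hb h0 hab (Ne.symm hc.1)).symm

end AuxMatch
end ECSS


namespace ECSS
section AuxNode

open SimpleGraph

variable {V : Type*} [Fintype V] [DecidableEq V] {G : SimpleGraph V} {H : G.Subgraph}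

lemma node_walk (hsp : H.IsSpanning) (A B : {C : G.Subgraph // IsComponent H C}) {S : Set V}
    (hS : ∀ a ∈ A.1.verts, ∀ b ∈ B.1.verts, G.Adj a b → a ∈ S ∨ b ∈ S) :
    ∀ {x y : ↥(Sᶜ)}, (G.induce Sᶜ).Walk x y →
      ∃ nw : (compGraph H).Walk
        ⟨compOf H x.1, compOf_isComponent (hsp x.1)⟩
        ⟨compOf H y.1, compOf_isComponent (hsp y.1)⟩,
        ∀ e ∈ nw.edges, e ≠ s(A, B)
  | x, _, Walk.nil => ⟨Walk.nil, by simp⟩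
  | x, y, Walk.cons (v := b) h p => by
      obtain ⟨nw, hnw⟩ := node_walk hsp A B hS p
      have hGxb : G.Adj x.1 b.1 := h
      by_cases heq : (⟨compOf H x.1, compOf_isComponent (hsp x.1)⟩ :
          {C : G.Subgraph // IsComponent H C}) = ⟨compOf H b.1, compOf_isComponent (hsp b.1)⟩
      · refine ⟨nw.copy heq.symm rfl, ?_⟩
        intro e he
        rw [Walk.edges_copy] at he
        exact hnw e he
      · have hadj : (compGraph H).Adj
            ⟨compOf H x.1, compOf_isComponent (hsp x.1)⟩
            ⟨compOf H b.1, compOf_isComponent (hsp b.1)⟩ :=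
          ⟨heq, x.1, b.1, mem_compOf_self (hsp x.1), mem_compOf_self (hsp b.1), hGxb⟩
        refine ⟨Walk.cons hadj nw, ?_⟩
        intro e he
        rw [Walk.edges_cons] at he
        rcases List.mem_cons.mp he with rfl | he
        · intro hAB
          rw [Sym2.eq_iff] at hAB
          rcases hAB with ⟨hA', hB'⟩ | ⟨hB', hA'⟩
          · have hxA : x.1 ∈ A.1.verts := by
              have := mem_compOf_self (hsp x.1)
              rwa [show compOf H x.1 = A.1 from congrArg Subtype.val hA'] at this
            have hbB : b.1 ∈ B.1.verts := by
              have := mem_compOf_self (hsp b.1)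
              rwa [show compOf H b.1 = B.1 from congrArg Subtype.val hB'] at this
            rcases hS x.1 hxA b.1 hbB hGxb with hmem | hmem
            · exact x.2 hmem
            · exact b.2 hmem
          · have hxB : x.1 ∈ B.1.verts := by
              have := mem_compOf_self (hsp x.1)
              rwa [show compOf H x.1 = B.1 from congrArg Subtype.val hB'] at this
            have hbA : b.1 ∈ A.1.verts := by
              have := mem_compOf_self (hsp b.1)
              rwa [show compOf H b.1 = A.1 from congrArg Subtype.val hA'] at this
            rcases hS b.1 hbA x.1 hxB hGxb.symm with hmem | hmem
            · exact b.2 hmem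
            · exact x.2 hmem
        · exact hnw e he

end AuxNode
end ECSS


/-- Let `G` be a 2-vertex-connected simple graph without irrelevant
edges and without non-isolating 2-vertex cuts, and let `H` be a bridgeless canonical
2-edge cover of `G`. Let `A` and `B` be adjacent nodes in the component graph `Ĝ_H`
such that `A` is a trivial segment. Then there exists a matching of size 3 between
`V(C_A)` and `V(C_B)` in `G`. -/
theorem statement_9 {V : Type*} [Fintype V] [DecidableEq V] {G : SimpleGraph V}
    (h2vc : ECSS.TwoVertexConnected G)
    (hirr : ∀ x y : V, ¬ ECSS.IsIrrelevantEdge G x y)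
    (hni : ∀ S : Set V, ¬ ECSS.IsNonIsolating2Cut G S)
    (H : G.Subgraph) (hcov : ECSS.IsTwoEdgeCover H) (hcan : ECSS.IsCanonical H)
    (hbl : ECSS.Bridgeless H)
    (A B : {C : G.Subgraph // ECSS.IsComponent H C})
    (hadj : (ECSS.compGraph H).Adj A B)
    (hA : ECSS.IsTrivialSegment (ECSS.compGraph H) A) :
    ECSS.HasMatchingBetween G A.1.verts B.1.verts 3 := by
  classical
  by_contra hno
  have hadj' := hadj
  rw [ECSS.compGraph] at hadj'
  obtain ⟨hABne, a0, b0, ha0, hb0, hG0⟩ := hadj'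
  have hdisjAB : ∀ x ∈ A.1.verts, x ∉ B.1.verts :=
    ECSS.comp_disjoint A.2 B.2 (fun h => hABne (Subtype.ext h))
  obtain ⟨u, v, huv, hcover⟩ := ECSS.cover_of_no_matching hdisjAB ha0 hb0 hG0 hno
  set S : Set V := {u, v} with hSdef
  have hScov : ∀ a ∈ A.1.verts, ∀ b ∈ B.1.verts, G.Adj a b → a ∈ S ∨ b ∈ S := by
    intro a ha b hb hab
    rcases hcover a ha b hb hab with h | h | h | h
    · exact Or.inl (by simp [hSdef, h])
    · exact Or.inr (by simp [hSdef, h])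
    · exact Or.inl (by simp [hSdef, h])
    · exact Or.inr (by simp [hSdef, h])
  -- key: no crossing reachability after deleting S
  have hkey : ∀ (x y : ↥(Sᶜ)), x.1 ∈ A.1.verts → y.1 ∈ B.1.verts →
      ¬ (G.induce Sᶜ).Reachable x y := by
    rintro x y hx hy ⟨w⟩
    obtain ⟨nw, hnw⟩ := ECSS.node_walk hcov.1 A B hScov w
    have e1 : (⟨ECSS.compOf H x.1, ECSS.compOf_isComponent (hcov.1 x.1)⟩ :
        {C : G.Subgraph // ECSS.IsComponent H C}) = A :=
      Subtype.ext (ECSS.comp_eq_compOf A.2 hx)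
    have e2 : (⟨ECSS.compOf H y.1, ECSS.compOf_isComponent (hcov.1 y.1)⟩ :
        {C : G.Subgraph // ECSS.IsComponent H C}) = B :=
      Subtype.ext (ECSS.comp_eq_compOf B.2 hy)
    have hnw' : ∀ e ∈ (nw.copy e1 e2).edges, e ≠ s(A, B) := by
      intro e he
      rw [Walk.edges_copy] at he
      exact hnw e he
    set p := (nw.copy e1 e2).bypass with hpdef
    have hpe : s(A, B) ∉ p.edges := fun hmem =>
      hnw' _ ((nw.copy e1 e2).edges_bypass_subset hmem) rfl
    have hcyc : (Walk.cons hadj p.reverse).IsCycle := by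
      refine (Walk.cons_isCycle_iff p.reverse hadj).mpr
        ⟨(nw.copy e1 e2).bypass_isPath.reverse, ?_⟩
      rw [Walk.edges_reverse, List.mem_reverse]
      exact hpe
    obtain ⟨Sg, hSg, hASg⟩ := ECSS.exists_seg_of_cycle _ hcyc
    exact hA Sg hSg hASg
  -- sizes
  have h4A : 4 ≤ A.1.verts.ncard := ECSS.comp_verts_four hcov hcan hbl A.2
  have h4B : 4 ≤ B.1.verts.ncard := ECSS.comp_verts_four hcov hcan hbl B.2
  have hSn : S.ncard = 2 := Set.ncard_pair huv
  have hdiff2 : ∀ (W : Set V), 4 ≤ W.ncard → 2 ≤ (W \ S).ncard := by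
    intro W h4
    have hsub : W ⊆ (W \ S) ∪ S := by
      intro t ht
      by_cases hts : t ∈ S
      · exact Or.inr hts
      · exact Or.inl ⟨ht, hts⟩
    have h := (Set.ncard_le_ncard hsub (Set.toFinite _)).trans (Set.ncard_union_le _ _)
    rw [hSn] at h
    omega
  obtain ⟨x0, hx0, x1, hx1, hx01⟩ :=
    (Set.one_lt_ncard (s := A.1.verts \ S) (Set.toFinite _)).mp
      (by have := hdiff2 _ h4A; omega)
  obtain ⟨y0, hy0, y1, hy1, hy01⟩ :=
    (Set.one_lt_ncard (s := B.1.verts \ S) (Set.toFinite _)).mp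
      (by have := hdiff2 _ h4B; omega)
  have mx0 : x0 ∈ Sᶜ := hx0.2
  have mx1 : x1 ∈ Sᶜ := hx1.2
  have my0 : y0 ∈ Sᶜ := hy0.2
  have my1 : y1 ∈ Sᶜ := hy1.2
  have hq : ∀ (x y : ↥(Sᶜ)), x.1 ∈ A.1.verts → y.1 ∈ B.1.verts →
      (G.induce Sᶜ).connectedComponentMk x ≠ (G.induce Sᶜ).connectedComponentMk y :=
    fun x y hx hy h => hkey x y hx hy (SimpleGraph.ConnectedComponent.eq.mp h)
  have hG1 : ECSS.numComponents G = 1 := ECSS.nc_one h2vc.1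
  have hcut : ECSS.IsCutSet G S := by
    rw [ECSS.IsCutSet, hG1]
    have hnt : Nontrivial ((G.induce Sᶜ).ConnectedComponent) :=
      ⟨_, _, hq ⟨x0, mx0⟩ ⟨y0, my0⟩ hx0.1 hy0.1⟩
    exact Finite.one_lt_card_iff_nontrivial.mpr hnt
  have hiso : ECSS.IsIsolating2Cut G S := by
    by_contra hI
    exact hni S ⟨⟨hSn, hcut⟩, hI⟩
  obtain ⟨-, h2comp, c, hc1⟩ := hiso
  obtain ⟨P, Q, hPQ, hPQuniv⟩ := Nat.card_eq_two_iff.mp h2comp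
  have hall : ∀ d : (G.induce Sᶜ).ConnectedComponent, d = P ∨ d = Q := by
    intro d
    have : d ∈ ({P, Q} : Set _) := hPQuniv ▸ Set.mem_univ d
    simpa using this
  set cm := (G.induce Sᶜ).connectedComponentMk with hcm
  have hxy00 := hq ⟨x0, mx0⟩ ⟨y0, my0⟩ hx0.1 hy0.1
  have hxy10 := hq ⟨x1, mx1⟩ ⟨y0, my0⟩ hx1.1 hy0.1
  have hxy01 := hq ⟨x0, mx0⟩ ⟨y1, my1⟩ hx0.1 hy1.1
  have hxy11 := hq ⟨x1, mx1⟩ ⟨y1, my1⟩ hx1.1 hy1.1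
  have hx01c : cm ⟨x0, mx0⟩ = cm ⟨x1, mx1⟩ := by
    rcases hall (cm ⟨x0, mx0⟩) with h1 | h1 <;> rcases hall (cm ⟨x1, mx1⟩) with h2 | h2 <;>
        rcases hall (cm ⟨y0, my0⟩) with h3 | h3 <;>
      first
        | exact h1.trans h2.symm
        | exact absurd (h1.trans h3.symm) hxy00
        | exact absurd (h2.trans h3.symm) hxy10
  have hy01c : cm ⟨y0, my0⟩ = cm ⟨y1, my1⟩ := by
    rcases hall (cm ⟨y0, my0⟩) with h1 | h1 <;> rcases hall (cm ⟨y1, my1⟩) with h2 | h2 <;>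
        rcases hall (cm ⟨x0, mx0⟩) with h3 | h3 <;>
      first
        | exact h1.trans h2.symm
        | exact absurd (h3.trans h1.symm) hxy00
        | exact absurd (h3.trans h2.symm) hxy01
  have hcx : 1 < (cm ⟨x0, mx0⟩).supp.ncard := by
    refine (Set.one_lt_ncard (Set.toFinite _)).mpr
      ⟨⟨x0, mx0⟩, ?_, ⟨x1, mx1⟩, ?_, ?_⟩
    · exact (SimpleGraph.ConnectedComponent.mem_supp_iff _ _).mpr rfl
    · exact (SimpleGraph.ConnectedComponent.mem_supp_iff _ _).mpr hx01c.symm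
    · intro h
      exact hx01 (congrArg Subtype.val h)
  have hcy : 1 < (cm ⟨y0, my0⟩).supp.ncard := by
    refine (Set.one_lt_ncard (Set.toFinite _)).mpr
      ⟨⟨y0, my0⟩, ?_, ⟨y1, my1⟩, ?_, ?_⟩
    · exact (SimpleGraph.ConnectedComponent.mem_supp_iff _ _).mpr rfl
    · exact (SimpleGraph.ConnectedComponent.mem_supp_iff _ _).mpr hy01c.symm
    · intro h
      exact hy01 (congrArg Subtype.val h)
  have hcc : c = cm ⟨x0, mx0⟩ ∨ c = cm ⟨y0, my0⟩ := by
    rcases hall c with h1 | h1 <;> rcases hall (cm ⟨x0, mx0⟩) with h2 | h2 <;>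
        rcases hall (cm ⟨y0, my0⟩) with h3 | h3 <;>
      first
        | exact absurd (h2.trans h3.symm) hxy00
        | exact Or.inl (h1.trans h2.symm)
        | exact Or.inr (h1.trans h3.symm)
  rcases hcc with rfl | rfl
  · rw [hc1] at hcx; omega
  · rw [hc1] at hcy; omega
end

section
/- Let G be a 2-edge-connected graph, {u,v,w} a large 3-vertex cut of G, and (V1, V2) a partition of V(G) ∖ {u,v,w} into nonempty parts such that there are no edges of G between V1 and V2. Let H be a 2-edge-connected spanning subgraph of G, let G_i = G[V_i ∪ {u,v,w}] and H_i = H ∩ E(G_i) for i ∈ {1,2}. Then H_1 and H_2 are each of one of the types A, B1, B2, C1, C2, C3 with respect to {u,v,w}. -/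
open SimpleGraph

open scoped Classical

namespace ECSS

/-! ### Subgraph notions -/

variable {V : Type*}

/-! ### Auxiliary lemmas for statement 14 -/

section Statement14Aux

variable {N : Type*}

def IsLeaf (F : SimpleGraph N) (n : N) : Prop := ∀ P Q, F.Adj n P → F.Adj n Q → P = Q

lemma exit_lemma {Λ Θ : SimpleGraph N} {C : Set N}
    (hadj : ∀ p q, p ∈ C → Λ.Adj p q → Θ.Adj p q) :
    ∀ {x z : N}, Λ.Walk x z → x ∈ C → z ∉ C →
      ∃ x₁ y₁, x₁ ∈ C ∧ y₁ ∉ C ∧ Θ.Adj x₁ y₁ ∧ Θ.Reachable x x₁ := by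
  intro x z W
  induction W with
  | nil => exact fun hx hz => absurd hx hz
  | @cons a m z h q ih =>
    intro hx hz
    by_cases hm : m ∈ C
    · obtain ⟨x₁, y₁, h1, h2, h3, h4⟩ := ih hm hz
      exact ⟨x₁, y₁, h1, h2, h3, ((hadj _ _ hx h).reachable).trans h4⟩
    · exact ⟨a, m, hx, hm, hadj _ _ hx h, Reachable.refl a⟩

lemma exists_max_path [Finite N] (F : SimpleGraph N)
    (cond : ∀ ⦃x y : N⦄, F.Walk x y → Prop) {x0 : N}
    (h0 : cond (Walk.nil : F.Walk x0 x0)) :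
    ∃ (u' v' : N) (p : F.Walk u' v'), p.IsPath ∧ cond p ∧
      ∀ (x y : N) (q : F.Walk x y), q.IsPath → cond q → q.length ≤ p.length := by
  haveI := Fintype.ofFinite N
  set L : Set ℕ := {l | ∃ (x y : N) (q : F.Walk x y), q.IsPath ∧ cond q ∧ q.length = l} with hL
  have hne : L.Nonempty := ⟨0, x0, x0, Walk.nil, Walk.IsPath.nil, h0, rfl⟩
  have hbdd : BddAbove L := by
    refine ⟨Fintype.card N, ?_⟩
    rintro l ⟨x, y, q, hq, -, rfl⟩
    have h1 := hq.support_nodup.length_le_card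
    rw [Walk.length_support] at h1
    omega
  obtain ⟨u', v', p, hp, hc, hl⟩ := Nat.sSup_mem hne hbdd
  exact ⟨u', v', p, hp, hc, fun x y q hq hcx => hl ▸ le_csSup hbdd ⟨x, y, q, hq, hcx, rfl⟩⟩

lemma reachable_of_mem_support {F : SimpleGraph N} {x y n : N} (p : F.Walk x y)
    (hn : n ∈ p.support) : F.Reachable x n := ⟨p.takeUntil n hn⟩

lemma exists_subpath {F : SimpleGraph N} {x y : N} (p : F.Walk x y) (hp : p.IsPath)
    {P Q : N} (hP : P ∈ p.support) (hQ : Q ∈ p.support) :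
    ∃ r : F.Walk P Q, r.IsPath ∧ (∀ n ∈ r.support, n ∈ p.support) ∧
      ∀ e ∈ r.edges, e ∈ p.edges := by
  by_cases hQ2 : Q ∈ (p.dropUntil P hP).support
  · refine ⟨(p.dropUntil P hP).takeUntil Q hQ2, (hp.dropUntil hP).takeUntil hQ2, ?_, ?_⟩
    · intro n hn
      exact p.support_dropUntil_subset hP (Walk.support_takeUntil_subset _ hQ2 hn)
    · intro e he
      exact p.edges_dropUntil_subset hP (Walk.edges_takeUntil_subset _ hQ2 he)
  · have hQ1 : Q ∈ (p.takeUntil P hP).support := by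
      have h2 : Q ∈ ((p.takeUntil P hP).append (p.dropUntil P hP)).support := by
        rw [Walk.take_spec p hP]; exact hQ
      rw [Walk.mem_support_append_iff] at h2
      tauto
    refine ⟨((p.takeUntil P hP).dropUntil Q hQ1).reverse,
      ((hp.takeUntil hP).dropUntil hQ1).reverse, ?_, ?_⟩
    · intro n hn
      rw [Walk.support_reverse, List.mem_reverse] at hn
      exact p.support_takeUntil_subset hP (Walk.support_dropUntil_subset _ hQ1 hn)
    · intro e he
      rw [Walk.edges_reverse, List.mem_reverse] at he
      exact p.edges_takeUntil_subset hP (Walk.edges_dropUntil_subset _ hQ1 he)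

lemma edge_mem_of_support {F : SimpleGraph N} (hac : F.IsAcyclic) {x y : N}
    (p : F.Walk x y) (hp : p.IsPath) {P Q : N} (h : F.Adj P Q)
    (hP : P ∈ p.support) (hQ : Q ∈ p.support) : s(P, Q) ∈ p.edges := by
  obtain ⟨r, hr, -, hre⟩ := exists_subpath p hp hP hQ
  have heq : (⟨r, hr⟩ : F.Path P Q) = Path.singleton h := hac.path_unique _ _
  have hre' : r = Walk.cons h Walk.nil := congrArg Subtype.val heq
  apply hre
  rw [hre']
  simp

lemma nbr_eq_of_mem_support {F : SimpleGraph N} (hac : F.IsAcyclic) {x v : N}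
    (p : F.Walk x v) (hp : p.IsPath) {P Q : N} (hP : F.Adj v P) (hQ : F.Adj v Q)
    (hPs : P ∈ p.support) (hQs : Q ∈ p.support) : P = Q := by
  have hrp : p.reverse.IsPath := hp.reverse
  have hPs' : P ∈ p.reverse.support := by rwa [Walk.support_reverse, List.mem_reverse]
  have hQs' : Q ∈ p.reverse.support := by rwa [Walk.support_reverse, List.mem_reverse]
  have e1 : p.reverse.takeUntil P hPs' = Walk.cons hP Walk.nil :=
    congrArg Subtype.val (hac.path_unique ⟨_, hrp.takeUntil hPs'⟩ (Path.singleton hP))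
  have e2 : p.reverse.takeUntil Q hQs' = Walk.cons hQ Walk.nil :=
    congrArg Subtype.val (hac.path_unique ⟨_, hrp.takeUntil hQs'⟩ (Path.singleton hQ))
  have h1 : p.reverse.support = v :: P :: (p.reverse.dropUntil P hPs').support.tail := by
    conv_lhs => rw [← Walk.take_spec p.reverse hPs']
    rw [Walk.support_append, e1]
    rw [Walk.support_eq_cons (p.reverse.dropUntil P hPs')]
    rfl
  have h2 : p.reverse.support = v :: Q :: (p.reverse.dropUntil Q hQs').support.tail := by
    conv_lhs => rw [← Walk.take_spec p.reverse hQs']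
    rw [Walk.support_append, e2]
    rw [Walk.support_eq_cons (p.reverse.dropUntil Q hQs')]
    rfl
  have h3 := h1.symm.trans h2
  simp only [List.cons.injEq] at h3
  exact h3.2.1


lemma isPath_concat {F : SimpleGraph N} {x v y : N} {p : F.Walk x v} (hp : p.IsPath)
    (h : F.Adj v y) (hy : y ∉ p.support) : (p.concat h).IsPath := by
  rw [← Walk.isPath_reverse_iff, Walk.reverse_concat, Walk.cons_isPath_iff]
  exact ⟨hp.reverse, by rwa [Walk.support_reverse, List.mem_reverse]⟩

lemma loop_path_length {F : SimpleGraph N} {s : N} {p : F.Walk s s} (hp : p.IsPath) :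
    p.length = 0 := by
  cases p with
  | nil => rfl
  | cons h q =>
    rw [Walk.cons_isPath_iff] at hp
    exact absurd q.end_mem_support hp.2
lemma end_leaf {F : SimpleGraph N} (hac : F.IsAcyclic) {u' v' r₀ : N}
    (p : F.Walk u' v') (hp : p.IsPath) (hru : F.Reachable u' r₀)
    (hmax : ∀ (x y : N) (q : F.Walk x y), q.IsPath → F.Reachable x r₀ → q.length ≤ p.length)
    {P Q : N} (hP : F.Adj v' P) (hQ : F.Adj v' Q) : P = Q := by
  have hnb : ∀ z, F.Adj v' z → z ∈ p.support := by
    intro z hz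
    by_contra hzs
    have hle := hmax _ _ (p.concat hz) (isPath_concat hp hz hzs) hru
    rw [Walk.length_concat] at hle
    omega
  exact nbr_eq_of_mem_support hac p hp hP hQ (hnb _ hP) (hnb _ hQ)

lemma start_leaf {F : SimpleGraph N} (hac : F.IsAcyclic) {u' v' r₀ : N}
    (p : F.Walk u' v') (hp : p.IsPath) (hru : F.Reachable u' r₀)
    (hmax : ∀ (x y : N) (q : F.Walk x y), q.IsPath → F.Reachable x r₀ → q.length ≤ p.length)
    {P Q : N} (hP : F.Adj u' P) (hQ : F.Adj u' Q) : P = Q := by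
  refine end_leaf hac p.reverse hp.reverse ((Reachable.symm ⟨p⟩).trans hru)
    (fun x y q hq hc => ?_) hP hQ
  rw [Walk.length_reverse]
  exact hmax x y q hq hc

lemma leaf_special {F : SimpleGraph N} {a b c : N}
    (hdeg : ∀ n, n ≠ a → n ≠ b → n ≠ c → ∃ P Q, P ≠ Q ∧ F.Adj n P ∧ F.Adj n Q) :
    ∀ n, IsLeaf F n → n = a ∨ n = b ∨ n = c := by
  intro n h
  by_contra hcon
  push_neg at hcon
  obtain ⟨P, Q, hne, h1, h2⟩ := hdeg n hcon.1 hcon.2.1 hcon.2.2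
  exact hne (h _ _ h1 h2)

lemma comp_special [Finite N] {F : SimpleGraph N} (hac : F.IsAcyclic) {a b c : N}
    (hleaf : ∀ n, IsLeaf F n → n = a ∨ n = b ∨ n = c) (n : N) :
    F.Reachable n a ∨ F.Reachable n b ∨ F.Reachable n c := by
  obtain ⟨u', v', p, hp, hc, hmax⟩ :=
    exists_max_path F (fun x y q => F.Reachable x n) (Reachable.refl n)
  have hv' := hleaf v' (fun P Q hP hQ => end_leaf hac p hp hc hmax hP hQ)
  have hr : F.Reachable n v' := (hc.symm).trans ⟨p⟩
  rcases hv' with rfl | rfl | rfl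
  · exact Or.inl hr
  · exact Or.inr (Or.inl hr)
  · exact Or.inr (Or.inr hr)

lemma singleton_comp [Finite N] {F : SimpleGraph N} (hac : F.IsAcyclic) {s : N}
    (hleaf : ∀ n, F.Reachable n s → IsLeaf F n → n = s) :
    ∀ n, F.Reachable n s → n = s := by
  obtain ⟨u', v', p, hp, hc, hmax⟩ :=
    exists_max_path F (fun x y q => F.Reachable x s) (Reachable.refl s)
  have hv' : v' = s := hleaf v' ((Reachable.symm ⟨p⟩).trans hc)
    (fun P Q hP hQ => end_leaf hac p hp hc hmax hP hQ)
  have hu' : u' = s := hleaf u' hc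
    (fun P Q hP hQ => start_leaf hac p hp hc hmax hP hQ)
  subst hv'; subst hu'
  have hlen : p.length = 0 := loop_path_length hp
  intro n hn
  by_contra hne
  have hn2 := hn
  obtain ⟨W⟩ := hn2
  have hle := hmax _ _ W.toPath.val W.toPath.property hn
  rw [hlen] at hle
  exact hne (Walk.eq_of_length_eq_zero (Nat.le_zero.mp hle))

lemma span_of_leaves [Finite N] {F : SimpleGraph N} (hac : F.IsAcyclic) {u' v' : N}
    (p : F.Walk u' v') (hp : p.IsPath)
    (hmax : ∀ (x y : N) (q : F.Walk x y), q.IsPath → F.Reachable x u' → q.length ≤ p.length)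
    (hleafsupp : ∀ n, F.Reachable n u' → IsLeaf F n → n ∈ p.support) :
    ∀ n, F.Reachable n u' → n ∈ p.support := by
  intro n hn
  by_contra hns
  have hn2 := hn
  obtain ⟨W⟩ := hn2
  obtain ⟨n₁, z₁, hn₁, hz₁, hadj₁, -⟩ :=
    exit_lemma (Λ := F) (Θ := F) (C := {m | m ∉ p.support}) (fun _ _ _ h => h) W hns
      (by simp [Walk.start_mem_support])
  simp only [Set.mem_setOf_eq, not_not] at hn₁ hz₁
  have hreachz₁ : F.Reachable z₁ u' := (reachable_of_mem_support p hz₁).symm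
  have hrn₁ : F.Reachable n₁ u' := (hadj₁.reachable).trans hreachz₁
  by_cases hz₁u : z₁ = u'
  · subst hz₁u
    have hq : (Walk.cons hadj₁ p).IsPath := (Walk.cons_isPath_iff _ _).mpr ⟨hp, hn₁⟩
    have hle := hmax _ _ _ hq hrn₁
    simp only [Walk.length_cons] at hle
    omega
  by_cases hz₁v : z₁ = v'
  · subst hz₁v
    have hq : (p.concat hadj₁.symm).IsPath := isPath_concat hp hadj₁.symm hn₁
    have hle := hmax _ _ _ hq (Reachable.refl u')
    rw [Walk.length_concat] at hle
    omega
  -- interior case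
  have hz₁n₁ : z₁ ≠ n₁ := fun h => hn₁ (h ▸ hz₁)
  obtain ⟨u'', v'', q, hq, hcond, hmax'⟩ :=
    exists_max_path F (fun x y r => x = n₁ ∧ z₁ ∉ r.support)
      (x0 := n₁) ⟨rfl, by simp [Walk.support_nil, hz₁n₁]⟩
  obtain ⟨rfl, hz₁q⟩ := hcond
  have hnb : ∀ z, F.Adj v'' z → z ∈ q.support ∨ z = z₁ := by
    intro z hz
    by_contra hcon
    push_neg at hcon
    obtain ⟨hzs, hzz₁⟩ := hcon
    have hq' : (q.concat hz).IsPath := isPath_concat hq hz hzs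
    have hcond' : (u'' = u'') ∧ z₁ ∉ (q.concat hz).support := by
      refine ⟨rfl, ?_⟩
      rw [Walk.support_concat]
      intro hmem
      rcases List.mem_append.mp hmem with h | h
      · exact hz₁q h
      · exact hzz₁ (List.mem_singleton.mp h).symm
    have hle := hmax' _ _ _ hq' ⟨rfl, hcond'.2⟩
    rw [Walk.length_concat] at hle
    omega
  by_cases hvz : F.Adj v'' z₁
  · have hcq : (Walk.cons hadj₁.symm q).IsPath := (Walk.cons_isPath_iff _ _).mpr ⟨hq, hz₁q⟩
    have heq : Walk.cons hadj₁.symm q = Walk.cons hvz.symm Walk.nil :=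
      congrArg Subtype.val (hac.path_unique ⟨Walk.cons hadj₁.symm q, hcq⟩ (Path.singleton hvz.symm))
    have hlen : q.length = 0 := by
      have := congrArg Walk.length heq
      simp only [Walk.length_cons, Walk.length_nil] at this
      omega
    have hveq : u'' = v'' := Walk.eq_of_length_eq_zero hlen
    subst hveq
    have hsupp : q.support = [u''] := by
      have h1 := Walk.support_eq_cons q
      have h2 : q.support.length = 1 := by rw [Walk.length_support, hlen]
      rw [h1] at h2 ⊢
      simp only [List.length_cons, Nat.add_eq_right, List.length_eq_zero_iff] at h2
      rw [h2]
    have hleafn : IsLeaf F u'' := by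
      intro P Q hPn hQn
      have hP' := (hnb _ hPn).resolve_left (by
        rw [hsupp]; intro hmem
        exact F.loopless.irrefl u'' ((List.mem_singleton.mp hmem) ▸ hPn))
      have hQ' := (hnb _ hQn).resolve_left (by
        rw [hsupp]; intro hmem
        exact F.loopless.irrefl u'' ((List.mem_singleton.mp hmem) ▸ hQn))
      rw [hP', hQ']
    exact hn₁ (hleafsupp u'' hrn₁ hleafn)
  · have hnbs : ∀ z, F.Adj v'' z → z ∈ q.support :=
      fun z hz => (hnb z hz).resolve_right (fun h => hvz (h ▸ hz))
    have hleafv : IsLeaf F v'' :=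
      fun P Q hP hQ => nbr_eq_of_mem_support hac q hq hP hQ (hnbs _ hP) (hnbs _ hQ)
    have hv''p : v'' ∈ p.support := hleafsupp v'' ((Reachable.symm ⟨q⟩).trans hrn₁) hleafv
    have hr₁ : (q.reverse.concat hadj₁).IsPath :=
      isPath_concat hq.reverse hadj₁ (by rwa [Walk.support_reverse, List.mem_reverse])
    obtain ⟨r₂, hr₂, hr₂s, -⟩ := exists_subpath p hp hv''p hz₁
    have heq : q.reverse.concat hadj₁ = r₂ :=
      congrArg Subtype.val (hac.path_unique ⟨q.reverse.concat hadj₁, hr₁⟩ ⟨r₂, hr₂⟩)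
    have hmem : u'' ∈ (q.reverse.concat hadj₁).support := by
      rw [Walk.support_concat]
      exact List.mem_append.mpr (Or.inl q.reverse.end_mem_support)
    rw [heq] at hmem
    exact hn₁ (hr₂s _ hmem)

lemma path_case [Finite N] {F : SimpleGraph N} (hac : F.IsAcyclic) {α β : N}
    (hαβ : α ≠ β) (hconn : ∀ n, F.Reachable n α)
    (hleaf : ∀ n, IsLeaf F n → n = α ∨ n = β) :
    ∃ (P Q : N) (p : F.Walk P Q), p.IsPath ∧ 1 ≤ p.length ∧ (∀ n, n ∈ p.support) ∧
      (∀ e ∈ F.edgeSet, e ∈ p.edges) ∧ (P = α ∧ Q = β ∨ P = β ∧ Q = α) := by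
  obtain ⟨u', v', p, hp, -, hmax₀⟩ :=
    exists_max_path F (fun x y q => True) (x0 := α) trivial
  have hmax : ∀ (x y : N) (q : F.Walk x y), q.IsPath → F.Reachable x u' → q.length ≤ p.length :=
    fun x y q hq _ => hmax₀ x y q hq trivial
  have hv' := hleaf v' (fun P Q hP hQ => end_leaf hac p hp (hconn u') (fun x y q hq _ => hmax₀ x y q hq trivial) hP hQ)
  have hu' := hleaf u' (fun P Q hP hQ => start_leaf hac p hp (hconn u') (fun x y q hq _ => hmax₀ x y q hq trivial) hP hQ)
  have hreach_u' : ∀ n, F.Reachable n u' := fun n => (hconn n).trans (hconn u').symm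
  have huv : u' ≠ v' := by
    rintro rfl
    have hlen : p.length = 0 := loop_path_length hp
    have hall : ∀ n, n = u' := by
      intro n
      by_contra hne
      have h1 := hreach_u' n
      obtain ⟨W⟩ := h1
      have hle := hmax₀ _ _ W.toPath.val W.toPath.property trivial
      rw [hlen] at hle
      exact hne (Walk.eq_of_length_eq_zero (Nat.le_zero.mp hle))
    exact hαβ ((hall α).trans (hall β).symm)
  have hends : (u' = α ∧ v' = β) ∨ (u' = β ∧ v' = α) := by
    rcases hu' with h1 | h1 <;> rcases hv' with h2 | h2
    · exact absurd (h1.trans h2.symm) huv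
    · exact Or.inl ⟨h1, h2⟩
    · exact Or.inr ⟨h1, h2⟩
    · exact absurd (h1.trans h2.symm) huv
  have hspan : ∀ n, n ∈ p.support := by
    intro n
    refine span_of_leaves hac p hp hmax ?_ n (hreach_u' n)
    intro m _ hm
    rcases hleaf m hm with rfl | rfl
    · rcases hends with ⟨h1, -⟩ | ⟨-, h2⟩
      · exact h1 ▸ p.start_mem_support
      · exact h2 ▸ p.end_mem_support
    · rcases hends with ⟨-, h2⟩ | ⟨h1, -⟩
      · exact h2 ▸ p.end_mem_support
      · exact h1 ▸ p.start_mem_support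
  have hedges : ∀ e ∈ F.edgeSet, e ∈ p.edges := by
    intro e he
    induction e with
    | h P Q => exact edge_mem_of_support hac p hp (F.mem_edgeSet.mp he) (hspan P) (hspan Q)
  have hlen : 1 ≤ p.length := by
    rcases Nat.eq_zero_or_pos p.length with h | h
    · exact absurd (Walk.eq_of_length_eq_zero h) huv
    · omega
  exact ⟨u', v', p, hp, hlen, hspan, hedges, hends⟩

lemma pair_case [Finite N] {F : SimpleGraph N} (hac : F.IsAcyclic) {x y z : N}
    (hleaf : ∀ n, IsLeaf F n → n = x ∨ n = y ∨ n = z)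
    (hRxy : F.Reachable x y) (hnxz : ¬ F.Reachable x z) :
    (x = y ∧ x ≠ z ∧ (∀ n, n = x ∨ n = z) ∧ (∀ P Q, ¬ F.Adj P Q)) ∨
    (x ≠ y ∧ x ≠ z ∧ y ≠ z ∧ ∃ p : F.Walk x y, p.IsPath ∧ 1 ≤ p.length ∧ z ∉ p.support ∧
        (∀ n, n ∈ p.support ∨ n = z) ∧ ∀ e ∈ F.edgeSet, e ∈ p.edges) := by
  have hnyz : ¬ F.Reachable y z := fun h => hnxz (hRxy.trans h)
  have hxz : x ≠ z := fun h => hnxz (h ▸ Reachable.refl x)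
  have hyz : y ≠ z := fun h => hnyz (h ▸ Reachable.refl y)
  have hz_single : ∀ n, F.Reachable n z → n = z := by
    refine singleton_comp hac ?_
    intro n hr hl
    rcases hleaf n hl with rfl | rfl | rfl
    · exact absurd hr hnxz
    · exact absurd hr hnyz
    · rfl
  have hz_noadj : ∀ q, ¬ F.Adj z q := by
    intro q h
    have := hz_single q (h.symm.reachable)
    subst this
    exact F.loopless.irrefl _ h
  by_cases hxy : x = y
  · subst hxy
    left
    have hx_single : ∀ n, F.Reachable n x → n = x := by
      refine singleton_comp hac ?_
      intro n hr hl
      rcases hleaf n hl with rfl | rfl | rfl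
      · rfl
      · rfl
      · exact absurd hr.symm hnxz
    refine ⟨rfl, hxz, ?_, ?_⟩
    · intro n
      rcases comp_special hac hleaf n with h | h | h
      · exact Or.inl (hx_single n h)
      · exact Or.inl (hx_single n h)
      · exact Or.inr (hz_single n h)
    · intro P Q h
      rcases comp_special hac hleaf P with h1 | h1 | h1
      · have hP := hx_single P h1
        subst hP
        have hQ := hx_single Q (h.symm.reachable)
        subst hQ
        exact F.loopless.irrefl _ h
      · have hP := hx_single P h1
        subst hP
        have hQ := hx_single Q (h.symm.reachable)
        subst hQ
        exact F.loopless.irrefl _ h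
      · have hP := hz_single P h1
        subst hP
        exact hz_noadj _ h
  · right
    obtain ⟨u', v', p, hp, hc, hmax⟩ :=
      exists_max_path F (fun a b q => F.Reachable a x) (x0 := x) (Reachable.refl x)
    have hrv'x : F.Reachable v' x := (Reachable.symm ⟨p⟩).trans hc
    have hv' : v' = x ∨ v' = y := by
      rcases hleaf v' (fun P Q hP hQ => end_leaf hac p hp hc hmax hP hQ) with h | h | h
      · exact Or.inl h
      · exact Or.inr h
      · exact absurd (h ▸ hrv'x).symm hnxz
    have hu' : u' = x ∨ u' = y := by
      rcases hleaf u' (fun P Q hP hQ => start_leaf hac p hp hc hmax hP hQ) with h | h | h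
      · exact Or.inl h
      · exact Or.inr h
      · exact absurd (h ▸ hc).symm hnxz
    have hruy : F.Reachable y u' := (hRxy.symm.trans hc.symm)
    have hrux : F.Reachable x u' := hc.symm
    have huv : u' ≠ v' := by
      rintro rfl
      have hlen : p.length = 0 := loop_path_length hp
      have hall : ∀ n, F.Reachable n u' → n = u' := by
        intro n hr
        by_contra hne
        have hr2 := hr.trans hc
        obtain ⟨W⟩ := hr
        have hle := hmax _ _ W.toPath.val W.toPath.property hr2
        rw [hlen] at hle
        exact hne (Walk.eq_of_length_eq_zero (Nat.le_zero.mp hle))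
      exact hxy ((hall x hrux).trans (hall y hruy).symm)
    have hends : (u' = x ∧ v' = y) ∨ (u' = y ∧ v' = x) := by
      rcases hu' with h1 | h1 <;> rcases hv' with h2 | h2
      · exact absurd (h1.trans h2.symm) huv
      · exact Or.inl ⟨h1, h2⟩
      · exact Or.inr ⟨h1, h2⟩
      · exact absurd (h1.trans h2.symm) huv
    have hmax' : ∀ (a b : N) (q : F.Walk a b), q.IsPath → F.Reachable a u' → q.length ≤ p.length :=
      fun a b q hq hr => hmax a b q hq (hr.trans hc)
    have hxsupp : x ∈ p.support ∧ y ∈ p.support := by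
      rcases hends with ⟨h1, h2⟩ | ⟨h1, h2⟩
      · exact ⟨h1 ▸ p.start_mem_support, h2 ▸ p.end_mem_support⟩
      · exact ⟨h2 ▸ p.end_mem_support, h1 ▸ p.start_mem_support⟩
    have hspan : ∀ n, F.Reachable n x → n ∈ p.support := by
      intro n hr
      refine span_of_leaves hac p hp hmax' ?_ n (hr.trans hrux)
      intro m hmr hml
      rcases hleaf m hml with rfl | rfl | rfl
      · exact hxsupp.1
      · exact hxsupp.2
      · exact absurd (hrux.trans hmr.symm) hnxz
    have hznotsupp : z ∉ p.support := by
      intro hmem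
      exact hnxz (hrux.trans (reachable_of_mem_support p hmem))
    have hcover : ∀ n, n ∈ p.support ∨ n = z := by
      intro n
      rcases comp_special hac hleaf n with h | h | h
      · exact Or.inl (hspan n h)
      · exact Or.inl (hspan n (h.trans hRxy.symm))
      · exact Or.inr (hz_single n h)
    have hedges : ∀ e ∈ F.edgeSet, e ∈ p.edges := by
      intro e he
      induction e with
      | h P Q =>
        have hadj : F.Adj P Q := F.mem_edgeSet.mp he
        have hPs : P ∈ p.support := by
          rcases hcover P with h | h
          · exact h
          · exact absurd (h ▸ hadj) (hz_noadj Q)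
        have hQs : Q ∈ p.support := by
          rcases hcover Q with h | h
          · exact h
          · exact absurd (h ▸ hadj.symm) (hz_noadj P)
        exact edge_mem_of_support hac p hp hadj hPs hQs
    have hlen1 : 1 ≤ p.length := by
      rcases Nat.eq_zero_or_pos p.length with h | h
      · exact absurd (Walk.eq_of_length_eq_zero h) huv
      · omega
    refine ⟨hxy, hxz, hyz, ?_⟩
    rcases hends with ⟨h1, h2⟩ | ⟨h1, h2⟩
    · subst h1; subst h2
      exact ⟨p, hp, hlen1, hznotsupp, hcover, hedges⟩
    · subst h1; subst h2
      refine ⟨p.reverse, hp.reverse, ?_, ?_, ?_, ?_⟩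
      · rwa [Walk.length_reverse]
      · rwa [Walk.support_reverse, List.mem_reverse]
      · intro n
        rcases hcover n with h | h
        · exact Or.inl (by rwa [Walk.support_reverse, List.mem_reverse])
        · exact Or.inr h
      · intro e he
        rw [Walk.edges_reverse, List.mem_reverse]
        exact hedges e he

lemma b1_build [Finite N] {F : SimpleGraph N} (hac : F.IsAcyclic) {α β a b c : N}
    (hαβ : α ≠ β) (hconn : ∀ n, F.Reachable n α)
    (hleaf2 : ∀ n, IsLeaf F n → n = α ∨ n = β)
    (ha : a = α ∨ a = β) (hb : b = α ∨ b = β) (hc : c = α ∨ c = β)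
    (hα : α = a ∨ α = b ∨ α = c) (hβ : β = a ∨ β = b ∨ β = c) :
    ∃ P Q : N, IsPathGraphWithEnds F P Q ∧ (a = P ∨ a = Q) ∧ (b = P ∨ b = Q) ∧
      (c = P ∨ c = Q) ∧ ¬(a = P ∧ b = P ∧ c = P) ∧ ¬(a = Q ∧ b = Q ∧ c = Q) := by
  obtain ⟨P, Q, p, hp, hlen, hspan, hedges, hPQ⟩ := path_case hac hαβ hconn hleaf2
  have hne1 : ¬(a = α ∧ b = α ∧ c = α) := by
    rintro ⟨h1, h2, h3⟩
    rcases hβ with h | h | h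
    · exact hαβ (h.trans h1).symm
    · exact hαβ (h.trans h2).symm
    · exact hαβ (h.trans h3).symm
  have hne2 : ¬(a = β ∧ b = β ∧ c = β) := by
    rintro ⟨h1, h2, h3⟩
    rcases hα with h | h | h
    · exact hαβ (h.trans h1)
    · exact hαβ (h.trans h2)
    · exact hαβ (h.trans h3)
  rcases hPQ with ⟨rfl, rfl⟩ | ⟨rfl, rfl⟩
  · exact ⟨P, Q, ⟨p, hp, hlen, hspan, hedges⟩, ha, hb, hc, hne1, hne2⟩
  · exact ⟨P, Q, ⟨p, hp, hlen, hspan, hedges⟩, ha.symm, hb.symm, hc.symm, hne2, hne1⟩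

theorem forest_classify [Finite N] (F : SimpleGraph N) (hac : F.IsAcyclic)
    (a b c : N)
    (hdeg : ∀ n, n ≠ a → n ≠ b → n ≠ c → ∃ P Q, P ≠ Q ∧ F.Adj n P ∧ F.Adj n Q) :
    (∀ n, n = a) ∨
    (∃ P Q : N, IsPathGraphWithEnds F P Q ∧ (a = P ∨ a = Q) ∧ (b = P ∨ b = Q) ∧
      (c = P ∨ c = Q) ∧ ¬(a = P ∧ b = P ∧ c = P) ∧ ¬(a = Q ∧ b = Q ∧ c = Q)) ∨
    (∃ P Q : N, P ≠ Q ∧ (∀ n, n = P ∨ n = Q) ∧ (∀ P' Q', ¬ F.Adj P' Q') ∧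
      ¬(a = b ∧ b = c)) ∨
    (F.IsTree ∧ a ≠ b ∧ a ≠ c ∧ b ≠ c) ∨
    (∃ P Q R : N, (∃ p : F.Walk P Q, p.IsPath ∧ 1 ≤ p.length ∧ R ∉ p.support ∧
        (∀ n, n ∈ p.support ∨ n = R) ∧ ∀ e ∈ F.edgeSet, e ∈ p.edges) ∧
      a ≠ b ∧ a ≠ c ∧ b ≠ c ∧ ({a, b, c} : Set N) = {P, Q, R}) ∨
    (a ≠ b ∧ a ≠ c ∧ b ≠ c ∧ (∀ n, n = a ∨ n = b ∨ n = c) ∧ ∀ P Q, ¬ F.Adj P Q) := by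
  have hleaf := leaf_special hdeg
  by_cases hab : F.Reachable a b
  · by_cases hac' : F.Reachable a c
    · -- connected
      have hconn : ∀ n, F.Reachable n a := by
        intro n
        rcases comp_special hac hleaf n with h | h | h
        · exact h
        · exact h.trans hab.symm
        · exact h.trans hac'.symm
      by_cases h1 : a = b
      · by_cases h2 : a = c
        · -- all equal : Type A
          left
          intro n
          refine singleton_comp hac ?_ n (hconn n)
          intro m hr hl
          rcases hleaf m hl with h | h | h
          · exact h
          · exact h.trans h1.symm
          · exact h.trans h2.symm
        · -- values {a, c}
          right; left
          refine b1_build hac h2 hconn ?_ (Or.inl rfl) (Or.inl h1.symm) (Or.inr rfl)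
            (Or.inl rfl) (Or.inr (Or.inr rfl))
          intro n hl
          rcases hleaf n hl with h | h | h
          · exact Or.inl h
          · exact Or.inl (h.trans h1.symm)
          · exact Or.inr h
      · by_cases h2 : a = c
        · -- values {a, b}
          right; left
          refine b1_build hac h1 hconn ?_ (Or.inl rfl) (Or.inr rfl) (Or.inl h2.symm)
            (Or.inl rfl) (Or.inr (Or.inl rfl))
          intro n hl
          rcases hleaf n hl with h | h | h
          · exact Or.inl h
          · exact Or.inr h
          · exact Or.inl (h.trans h2.symm)
        · by_cases h3 : b = c
          · -- values {a, b}
            right; left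
            refine b1_build hac h1 hconn ?_ (Or.inl rfl) (Or.inr rfl) (Or.inr h3.symm)
              (Or.inl rfl) (Or.inr (Or.inl rfl))
            intro n hl
            rcases hleaf n hl with h | h | h
            · exact Or.inl h
            · exact Or.inr h
            · exact Or.inr (h.trans h3.symm)
          · -- C1 : tree with three distinct
            right; right; right; left
            haveI : Nonempty N := ⟨a⟩
            refine ⟨⟨⟨fun m n => (hconn m).trans (hconn n).symm⟩, hac⟩, h1, h2, h3⟩
    · -- pair {a,b}, c isolated
      rcases pair_case hac hleaf hab hac' with ⟨hxy, hxz, hcov, hnadj⟩ |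
        ⟨hxy, hxz, hyz, p, hp, hlen, hzsupp, hcov, hedges⟩
      · right; right; left
        exact ⟨a, c, hxz, hcov, hnadj, fun h => hxz (h.1.trans h.2)⟩
      · right; right; right; right; left
        refine ⟨a, b, c, ⟨p, hp, hlen, hzsupp, hcov, hedges⟩, hxy, hxz, hyz, rfl⟩
  · by_cases hac' : F.Reachable a c
    · -- pair {a,c}, b isolated
      have hnab : ¬ F.Reachable a b := hab
      rcases pair_case hac (x := a) (y := c) (z := b)
        (fun n hl => by rcases hleaf n hl with h | h | h
                        · exact Or.inl h
                        · exact Or.inr (Or.inr h)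
                        · exact Or.inr (Or.inl h)) hac' hnab with
        ⟨hxy, hxz, hcov, hnadj⟩ | ⟨hxy, hxz, hyz, p, hp, hlen, hzsupp, hcov, hedges⟩
      · right; right; left
        exact ⟨a, b, hxz, hcov, hnadj, fun h => hxz h.1⟩
      · right; right; right; right; left
        refine ⟨a, c, b, ⟨p, hp, hlen, hzsupp, hcov, hedges⟩, hxz, hxy, fun h => hyz h.symm, ?_⟩
        ext m
        simp only [Set.mem_insert_iff, Set.mem_singleton_iff]
        tauto
    · by_cases hbc : F.Reachable b c
      · -- pair {b,c}, a isolated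
        rcases pair_case hac (x := b) (y := c) (z := a)
          (fun n hl => by rcases hleaf n hl with h | h | h
                          · exact Or.inr (Or.inr h)
                          · exact Or.inl h
                          · exact Or.inr (Or.inl h)) hbc
          (fun h => hab (h.symm)) with
          ⟨hxy, hxz, hcov, hnadj⟩ | ⟨hxy, hxz, hyz, p, hp, hlen, hzsupp, hcov, hedges⟩
        · right; right; left
          refine ⟨b, a, hxz, hcov, hnadj, ?_⟩
          rintro ⟨h1, h2⟩
          exact hxz (h1.symm)
        · right; right; right; right; left
          refine ⟨b, c, a, ⟨p, hp, hlen, hzsupp, hcov, hedges⟩,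
            fun h => hxz h.symm, fun h => hyz h.symm, hxy, ?_⟩
          ext m
          simp only [Set.mem_insert_iff, Set.mem_singleton_iff]
          tauto
      · -- three isolated : C3
        right; right; right; right; right
        have ha_single : ∀ n, F.Reachable n a → n = a := by
          refine singleton_comp hac ?_
          intro n hr hl
          rcases hleaf n hl with h | h | h
          · exact h
          · exact absurd (hr.symm.trans (h ▸ Reachable.refl n)) hab
          · exact absurd (hr.symm.trans (h ▸ Reachable.refl n)) hac'
        have hb_single : ∀ n, F.Reachable n b → n = b := by
          refine singleton_comp hac ?_
          intro n hr hl
          rcases hleaf n hl with h | h | h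
          · exact absurd ((h ▸ hr) : F.Reachable a b) hab
          · exact h
          · exact absurd ((h ▸ hr) : F.Reachable c b).symm hbc
        have hc_single : ∀ n, F.Reachable n c → n = c := by
          refine singleton_comp hac ?_
          intro n hr hl
          rcases hleaf n hl with h | h | h
          · exact absurd ((h ▸ hr) : F.Reachable a c) hac'
          · exact absurd ((h ▸ hr) : F.Reachable b c) hbc
          · exact h
        have hcov : ∀ n, n = a ∨ n = b ∨ n = c := by
          intro n
          rcases comp_special hac hleaf n with h | h | h
          · exact Or.inl (ha_single n h)
          · exact Or.inr (Or.inl (hb_single n h))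
          · exact Or.inr (Or.inr (hc_single n h))
        refine ⟨fun h => hab (h ▸ Reachable.refl a), fun h => hac' (h ▸ Reachable.refl a),
          fun h => hbc (h ▸ Reachable.refl b), hcov, ?_⟩
        intro P Q h
        rcases hcov P with rfl | rfl | rfl
        · have := ha_single Q (h.symm.reachable)
          subst this; exact F.loopless.irrefl _ h
        · have := hb_single Q (h.symm.reachable)
          subst this; exact F.loopless.irrefl _ h
        · have := hc_single Q (h.symm.reachable)
          subst this; exact F.loopless.irrefl _ h


end Statement14Aux

section Statement14Contract

variable {V : Type*} {G : SimpleGraph V} (K : G.Subgraph)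

lemma sameTwoEC_of_nonbridge {x y : V} (hadj : K.Adj x y)
    (h : (K.deleteEdges {s(x, y)}).spanningCoe.Reachable x y) : SameTwoEC K x y := by
  refine ⟨(show K.spanningCoe.Adj x y from hadj).reachable, fun e he => ?_⟩
  by_cases hexy : e = s(x, y)
  · exact hexy ▸ h
  · refine (show (K.deleteEdges {e}).spanningCoe.Adj x y from ?_).reachable
    rw [Subgraph.spanningCoe_adj, Subgraph.deleteEdges_adj]
    refine ⟨hadj, ?_⟩
    simp only [Set.mem_singleton_iff]
    exact fun hh => hexy hh.symm

lemma subgraph_reach {K' : G.Subgraph} (hc : K'.Connected) {x y : V}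
    (hx : x ∈ K'.verts) (hy : y ∈ K'.verts) : K'.spanningCoe.Reachable x y := by
  obtain ⟨W⟩ := hc.preconnected ⟨x, hx⟩ ⟨y, hy⟩
  exact ⟨W.map ⟨Subtype.val, fun {a b} h => h⟩⟩

lemma lift_walk {x y : K.verts} (hxy : K.Adj x.1 y.1) :
    ∀ {P' Q' : SNode K} (W : (contractTwoEC K).Walk P' Q'),
      s(cls K x, cls K y) ∉ W.edges →
      ∀ (x' y' : K.verts), cls K x' = P' →
        cls K y' = Q' →
        (K.deleteEdges {s(x.1, y.1)}).spanningCoe.Reachable x'.1 y'.1 := by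
  intro P' Q' W
  induction W with
  | nil =>
    intro _ x' y' h1 h2
    exact (Quotient.exact (h1.trans h2.symm)).2 _ (Subgraph.mem_edgeSet.mpr hxy)
  | @cons Pa Pm Pz h q ih =>
    intro hW x' y' h1 h2
    rw [Walk.edges_cons, List.mem_cons] at hW
    push_neg at hW
    obtain ⟨hhead, htail⟩ := hW
    obtain ⟨hne', x₁, y₁, hx₁, hy₁, hK₁⟩ := h
    have hstep : s(x₁.1, y₁.1) ≠ s(x.1, y.1) := by
      intro hcon
      refine hhead ?_
      have hx₁' : cls K x₁ = Pa := hx₁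
      have hy₁' : cls K y₁ = Pm := hy₁
      rw [← hx₁', ← hy₁']
      rcases Sym2.eq_iff.mp hcon with ⟨e1, e2⟩ | ⟨e1, e2⟩
      · rw [Subtype.ext e1, Subtype.ext e2]
      · rw [Subtype.ext e1, Subtype.ext e2]
        exact Sym2.eq_swap
    have hr1 : (K.deleteEdges {s(x.1, y.1)}).spanningCoe.Reachable x'.1 x₁.1 :=
      (Quotient.exact (h1.trans hx₁.symm)).2 _ (Subgraph.mem_edgeSet.mpr hxy)
    have hstepAdj : (K.deleteEdges {s(x.1, y.1)}).spanningCoe.Adj x₁.1 y₁.1 := by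
      rw [Subgraph.spanningCoe_adj, Subgraph.deleteEdges_adj]
      exact ⟨hK₁, by simp [hstep]⟩
    exact hr1.trans (hstepAdj.reachable.trans (ih htail y₁ y' hy₁ h2))

lemma contract_acyclic : (contractTwoEC K).IsAcyclic := by
  rw [isAcyclic_iff_forall_adj_isBridge]
  intro P Q hPQ
  rw [isBridge_iff]
  refine fun hr => ?_
  rw [reachable_delete_edges_iff_exists_walk] at hr
  obtain ⟨W, hW⟩ := hr
  obtain ⟨hne, x, y, hx, hy, hxy⟩ := hPQ
  have hreach : (K.deleteEdges {s(x.1, y.1)}).spanningCoe.Reachable x.1 y.1 :=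
    lift_walk K hxy W (by
      have hx' : cls K x = P := hx
      have hy' : cls K y = Q := hy
      rw [hx', hy']; exact hW) x y hx hy
  apply hne
  rw [← hx, ← hy]
  exact Quotient.sound (sameTwoEC_of_nonbridge K hxy hreach)


def clsSet (K : G.Subgraph) (n : SNode K) : Set V :=
  {p | ∃ hp : p ∈ K.verts, cls K ⟨p, hp⟩ = n}

lemma degree_lemma {H : G.Subgraph} (hHc : H.Connected)
    (hH2 : ∀ e ∈ H.edgeSet, (H.deleteEdges {e}).Connected) (hsp : H.IsSpanning)
    {u v w : V} {Vi S : Set V}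
    (hSdef : S = Vi ∪ {u, v, w})
    (hclosed : ∀ p q, p ∈ Vi → H.Adj p q → q ∈ S)
    (hu : u ∈ (H.induce S).verts) (hv : v ∈ (H.induce S).verts)
    (hw : w ∈ (H.induce S).verts)
    (n : SNode (H.induce S))
    (hnu : n ≠ cls (H.induce S) ⟨u, hu⟩) (hnv : n ≠ cls (H.induce S) ⟨v, hv⟩)
    (hnw : n ≠ cls (H.induce S) ⟨w, hw⟩) :
    ∃ P Q, P ≠ Q ∧ (contractTwoEC (H.induce S)).Adj n P ∧
      (contractTwoEC (H.induce S)).Adj n Q := by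
  have hCVi : ∀ p ∈ clsSet (H.induce S) n, p ∈ Vi := by
    rintro p ⟨hp, hmk⟩
    have hpS : p ∈ S := hp
    rw [hSdef] at hpS
    rcases hpS with h | h
    · exact h
    · exfalso
      simp only [Set.mem_insert_iff, Set.mem_singleton_iff] at h
      rcases h with h | h | h
      · exact hnu (show n = cls (H.induce S) ⟨u, hu⟩ from h ▸ hmk.symm)
      · exact hnv (show n = cls (H.induce S) ⟨v, hv⟩ from h ▸ hmk.symm)
      · exact hnw (show n = cls (H.induce S) ⟨w, hw⟩ from h ▸ hmk.symm)
  have hHK : ∀ p q, p ∈ clsSet (H.induce S) n → H.Adj p q → (H.induce S).Adj p q := by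
    intro p q hp h
    rw [Subgraph.induce_adj]
    exact ⟨hp.1, hclosed p q (hCVi p hp) h, h⟩
  have huC : u ∉ clsSet (H.induce S) n := fun h => hnu h.2.symm
  obtain ⟨z₀, hz₀⟩ := Quotient.exists_rep n
  have hz₀C : z₀.1 ∈ clsSet (H.induce S) n := ⟨z₀.2, hz₀⟩
  obtain ⟨W₁⟩ := subgraph_reach hHc (hsp z₀.1) (hsp u)
  obtain ⟨x₀, y₀, hx₀C, hy₀C, hKxy₀, -⟩ :=
    exit_lemma (Λ := H.spanningCoe) (Θ := (H.induce S).spanningCoe)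
      (C := clsSet (H.induce S) n)
      (fun p q hp h => hHK p q hp h) W₁ hz₀C huC
  have hKadj₀ : (H.induce S).Adj x₀ y₀ := hKxy₀
  have hy₀v : y₀ ∈ (H.induce S).verts := hKadj₀.snd_mem
  have hadjF : (contractTwoEC (H.induce S)).Adj n (cls (H.induce S) ⟨y₀, hy₀v⟩) :=
    ⟨fun h => hy₀C ⟨hy₀v, h.symm⟩, ⟨x₀, hx₀C.1⟩, ⟨y₀, hy₀v⟩, hx₀C.2, rfl, hKadj₀⟩
  by_contra hcon
  have huniq : ∀ Q', (contractTwoEC (H.induce S)).Adj n Q' →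
      Q' = cls (H.induce S) ⟨y₀, hy₀v⟩ := by
    intro Q' hQ'
    by_contra hne'
    exact hcon ⟨Q', cls (H.induce S) ⟨y₀, hy₀v⟩, hne', hQ', hadjF⟩
  have he₀K : s(x₀, y₀) ∈ (H.induce S).edgeSet := Subgraph.mem_edgeSet.mpr hKadj₀
  have he₀H : s(x₀, y₀) ∈ H.edgeSet := by
    have h := hKadj₀
    rw [Subgraph.induce_adj] at h
    exact Subgraph.mem_edgeSet.mpr h.2.2
  have hver : x₀ ∈ (H.deleteEdges {s(x₀, y₀)}).verts := by
    rw [Subgraph.deleteEdges_verts]; exact hsp x₀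
  have hver' : y₀ ∈ (H.deleteEdges {s(x₀, y₀)}).verts := by
    rw [Subgraph.deleteEdges_verts]; exact hsp y₀
  obtain ⟨W₂⟩ := subgraph_reach (hH2 s(x₀, y₀) he₀H) hver hver'
  obtain ⟨x₁, y₁, hx₁C, hy₁C, hadj₁, hreach₁⟩ :=
    exit_lemma (Λ := (H.deleteEdges {s(x₀, y₀)}).spanningCoe)
      (Θ := ((H.induce S).deleteEdges {s(x₀, y₀)}).spanningCoe)
      (C := clsSet (H.induce S) n)
      (fun p q hp h => by
        rw [Subgraph.spanningCoe_adj, Subgraph.deleteEdges_adj] at h ⊢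
        exact ⟨hHK p q hp h.1, h.2⟩) W₂ hx₀C hy₀C
  have hK₁ : (H.induce S).Adj x₁ y₁ := by
    have h := hadj₁
    rw [Subgraph.spanningCoe_adj, Subgraph.deleteEdges_adj] at h
    exact h.1
  have hy₁v : y₁ ∈ (H.induce S).verts := hK₁.snd_mem
  have hadjF₁ : (contractTwoEC (H.induce S)).Adj n (cls (H.induce S) ⟨y₁, hy₁v⟩) :=
    ⟨fun h => hy₁C ⟨hy₁v, h.symm⟩, ⟨x₁, hx₁C.1⟩, ⟨y₁, hy₁v⟩, hx₁C.2, rfl, hK₁⟩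
  have hy₁P₀ : cls (H.induce S) ⟨y₁, hy₁v⟩ = cls (H.induce S) ⟨y₀, hy₀v⟩ :=
    huniq _ hadjF₁
  have hreach2 : ((H.induce S).deleteEdges {s(x₀, y₀)}).spanningCoe.Reachable y₁ y₀ :=
    (Quotient.exact hy₁P₀).2 s(x₀, y₀) he₀K
  have hreach3 : ((H.induce S).deleteEdges {s(x₀, y₀)}).spanningCoe.Reachable x₀ y₀ :=
    hreach₁.trans (hadj₁.reachable.trans hreach2)
  have hsame : SameTwoEC (H.induce S) x₀ y₀ :=
    sameTwoEC_of_nonbridge (H.induce S) hKadj₀ hreach3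
  have hfin : cls (H.induce S) ⟨x₀, hx₀C.1⟩ = cls (H.induce S) ⟨y₀, hy₀v⟩ :=
    Quotient.sound hsame
  exact hy₀C ⟨hy₀v, hfin ▸ hx₀C.2⟩

lemma side_classify {V : Type*} [Fintype V] {G : SimpleGraph V} (H : G.Subgraph)
    (hHc : H.Connected) (hH2 : ∀ e ∈ H.edgeSet, (H.deleteEdges {e}).Connected)
    (hsp : H.IsSpanning) (u v w : V) (Vi : Set V)
    (hclosed : ∀ p q, p ∈ Vi → H.Adj p q → q ∈ Vi ∪ {u, v, w})
    (hu : u ∈ (H.induce (Vi ∪ {u, v, w})).verts)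
    (hv : v ∈ (H.induce (Vi ∪ {u, v, w})).verts)
    (hw : w ∈ (H.induce (Vi ∪ {u, v, w})).verts) :
    OfAnyType (H.induce (Vi ∪ {u, v, w})) ⟨u, hu⟩ ⟨v, hv⟩ ⟨w, hw⟩ := by
  haveI : Finite (SNode (H.induce (Vi ∪ {u, v, w}))) := Quotient.finite _
  have hres := forest_classify (contractTwoEC (H.induce (Vi ∪ {u, v, w})))
    (contract_acyclic _)
    (cls _ ⟨u, hu⟩) (cls _ ⟨v, hv⟩) (cls _ ⟨w, hw⟩)
    (fun n h1 h2 h3 => degree_lemma hHc hH2 hsp rfl hclosed hu hv hw n h1 h2 h3)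
  exact hres

end Statement14Contract

end ECSS

/-- Let `G` be 2-edge-connected, `{u,v,w}` a large 3-vertex cut of `G`,
and `(V1, V2)` a partition of `V(G) ∖ {u,v,w}` into nonempty parts with no edges of
`G` between `V1` and `V2`. Let `H` be a 2-edge-connected spanning subgraph of `G`,
`G_i = G[V_i ∪ {u,v,w}]` and `H_i = H ∩ E(G_i)`. Then `H_1` and `H_2` are each of one
of the types `A, B1, B2, C1, C2, C3` with respect to `{u,v,w}`. -/
theorem statement_14 {V : Type*} [Fintype V] [DecidableEq V] (G : SimpleGraph V)
    (hG : ECSS.IsTwoEdgeConnected G) (u v w : V)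
    (hcut : ECSS.IsLarge3Cut G {u, v, w})
    (V1 V2 : Set V) (hunion : V1 ∪ V2 = ({u, v, w} : Set V)ᶜ)
    (hdisj : Disjoint V1 V2) (hne1 : V1.Nonempty) (hne2 : V2.Nonempty)
    (hnoedge : ∀ a ∈ V1, ∀ b ∈ V2, ¬ G.Adj a b)
    (H : G.Subgraph) (hH : ECSS.IsTwoECSS G H) :
    ECSS.OfAnyType (H.induce (V1 ∪ {u, v, w}))
        ⟨u, by simp⟩ ⟨v, by simp⟩ ⟨w, by simp⟩ ∧
      ECSS.OfAnyType (H.induce (V2 ∪ {u, v, w}))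
        ⟨u, by simp⟩ ⟨v, by simp⟩ ⟨w, by simp⟩ := by
  obtain ⟨hsp, hHc, hH2⟩ := hH
  have hVmem : ∀ q : V, q ∈ ({u, v, w} : Set V) ∨ (q ∈ V1 ∨ q ∈ V2) := by
    intro q
    by_cases h : q ∈ ({u, v, w} : Set V)
    · exact Or.inl h
    · right
      have hq : q ∈ V1 ∪ V2 := by rw [hunion]; exact h
      exact hq
  constructor
  · refine ECSS.side_classify H hHc hH2 hsp u v w V1 ?_ (by simp) (by simp) (by simp)
    intro p q hp hadj
    rcases hVmem q with h | h | h
    · exact Set.mem_union_right _ h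
    · exact Set.mem_union_left _ h
    · exact absurd (H.adj_sub hadj) (hnoedge p hp q h)
  · refine ECSS.side_classify H hHc hH2 hsp u v w V2 ?_ (by simp) (by simp) (by simp)
    intro p q hp hadj
    rcases hVmem q with h | h | h
    · exact Set.mem_union_right _ h
    · exact absurd ((H.adj_sub hadj).symm) (hnoedge q h p hp)
    · exact Set.mem_union_left _ h
end
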